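/- arXiv:1105.0557 — 5 statements merged into one kernel-verified Lean document; each statement's English description precedes it below -/
import Mathlib

section
/- Let (X,d) be a separable metric space such that the action (Iso(X),X) is Cauchy-indivisible. Then the subset X ∪ X_l of X̂ is E-invariant, i.e., f(X ∪ X_l) ⊆ X ∪ X_l for every f ∈ E. -/
open Filter Topology Set UniformSpace

noncomputable section

/-- The topology of pointwise convergence on the group of surjective isometries of `X`. -/
instance isoPointwiseTopology (X : Type*) [MetricSpace X] : TopologicalSpace (X ≃ᵢ X) :=
  TopologicalSpace.induced (fun g => (g : X → X)) Pi.topologicalSpace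

/-- A net `g` diverges (`g_i → ∞`), i.e. it has no convergent subnet; equivalently,
no cluster point. -/
def DivergentNet {G : Type*} [TopologicalSpace G] {ι : Type*} [Preorder ι]
    (g : ι → G) : Prop :=
  ∀ h : G, ¬ MapClusterPt h atTop g

/-- A sequence `g` diverges (`g_n → ∞`), i.e. it has no convergent subsequence. -/
def DivergentSeq {G : Type*} [TopologicalSpace G] (g : ℕ → G) : Prop :=
  ∀ φ : ℕ → ℕ, StrictMono φ → ∀ h : G, ¬ Tendsto (g ∘ φ) atTop (𝓝 h)

/-- The natural evaluation action of `Iso(X)` on `X` is Cauchy-indivisible: whenever a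
net `g` in `Iso(X)` has no convergent subnet and `(g_i x)` is a Cauchy net for some
`x`, then `(g_i y)` is a Cauchy net for every `y`. -/
def IsoCauchyIndivisible (X : Type*) [MetricSpace X] : Prop :=
  ∀ (ι : Type*) [Nonempty ι] [Preorder ι] [IsDirected ι (· ≤ ·)],
    ∀ g : ι → X ≃ᵢ X, DivergentNet g →
      (∃ x : X, Cauchy (map (fun i => g i x) atTop)) →
      ∀ y : X, Cauchy (map (fun i => g i y) atTop)

/-- Properness of the isometric evaluation action, expressed through emptiness of all
limit sets `L(x)`: no net in `Iso(X)` without convergent subnet has `(g_i x)`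
converging in `X`. -/
def IsoProperLimits (X : Type*) [MetricSpace X] : Prop :=
  ∀ (ι : Type*) [Nonempty ι] [Preorder ι] [IsDirected ι (· ≤ ·)],
    ∀ g : ι → X ≃ᵢ X, DivergentNet g →
      ∀ x y : X, ¬ Tendsto (fun i => g i x) atTop (𝓝 y)

/-- The canonical lift `ĝ` of an isometry of `X` to the completion `X̂`. -/
def hatIso {X : Type*} [MetricSpace X] (g : X ≃ᵢ X) : Completion X → Completion X :=
  Completion.map (g : X → X)

/-- The lifted group `{ĝ : g ∈ Iso(X)}` inside the selfmaps of `X̂`. -/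
def hatIsoSet (X : Type*) [MetricSpace X] : Set (Completion X → Completion X) :=
  Set.range (hatIso (X := X))

/-- The Ellis semigroup `E`: the closure of the lifted group `{ĝ}` in the topology of
pointwise convergence on selfmaps of `X̂`. -/
def Ellis (X : Type*) [MetricSpace X] : Set (Completion X → Completion X) :=
  closure (hatIsoSet X)

/-- The set `H` of pointwise limits on `X̂` of divergent sequences of lifted isometries. -/
def Hset (X : Type*) [MetricSpace X] : Set (Completion X → Completion X) :=
  { h | Continuous h ∧ ∃ g : ℕ → X ≃ᵢ X, DivergentSeq g ∧
      Tendsto (fun n => hatIso (g n)) atTop (𝓝 h) }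

/-- The set `X_l ⊆ X̂` of limit points of the action `(Iso(X), X)` in the completion. -/
def Xl (X : Type*) [MetricSpace X] : Set (Completion X) :=
  { y | ∃ (g : ℕ → X ≃ᵢ X) (x : X), DivergentSeq g ∧
      CauchySeq (fun n => g n x) ∧
      Tendsto (fun n => ((g n x : X) : Completion X)) atTop (𝓝 y) }

/-- The set `X_p ⊆ X̂` of special limit points of the action `(Iso(X), X)`. -/
def Xp (X : Type*) [MetricSpace X] : Set (Completion X) :=
  { y | ∃ (g : ℕ → X ≃ᵢ X) (x : X), DivergentSeq g ∧
      CauchySeq (fun n => g n x) ∧ CauchySeq (fun n => (g n).symm x) ∧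
      Tendsto (fun n => ((g n x : X) : Completion X)) atTop (𝓝 y) }

/-- `X ∪ X_l`, with `X` identified with its image in the completion `X̂`. -/
def XcupXl (X : Type*) [MetricSpace X] : Set (Completion X) :=
  Set.range ((↑) : X → Completion X) ∪ Xl X

/-- `X ∪ X_p`, with `X` identified with its image in the completion `X̂`. -/
def XcupXp (X : Type*) [MetricSpace X] : Set (Completion X) :=
  Set.range ((↑) : X → Completion X) ∪ Xp X

/-- The Ellis semigroup is a group: every element has a two-sided inverse in `E`
(under composition). -/
def EllisIsGroup (X : Type*) [MetricSpace X] : Prop :=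
  ∀ f ∈ Ellis X, ∃ g ∈ Ellis X, f ∘ g = id ∧ g ∘ f = id



section Aux

variable {X : Type*} [MetricSpace X]

lemma hatIso_coe (g : X ≃ᵢ X) (x : X) :
    hatIso g (x : Completion X) = ((g x : X) : Completion X) :=
  Completion.map_coe g.isometry.uniformContinuous x

lemma hatIso_isometry (g : X ≃ᵢ X) : Isometry (hatIso g) :=
  g.isometry.completion_map

lemma ellis_isometry {f : Completion X → Completion X} (hf : f ∈ Ellis X) :
    Isometry f := by
  have hclosed : IsClosed {F : Completion X → Completion X |
      ∀ a b, dist (F a) (F b) = dist a b} := by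
    have heq : {F : Completion X → Completion X | ∀ a b, dist (F a) (F b) = dist a b} =
        ⋂ (a) (b), {F : Completion X → Completion X | dist (F a) (F b) = dist a b} := by
      ext F; simp [Set.mem_iInter, Set.mem_setOf_eq]
    rw [heq]
    exact isClosed_iInter fun a => isClosed_iInter fun b =>
      isClosed_eq ((continuous_apply a).dist (continuous_apply b)) continuous_const
  have hsub : hatIsoSet X ⊆ {F : Completion X → Completion X |
      ∀ a b, dist (F a) (F b) = dist a b} := by
    rintro _ ⟨g, rfl⟩
    exact fun a b => (hatIso_isometry g).dist_eq a b
  exact Isometry.of_dist_eq (closure_minimal hsub hclosed hf)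

lemma tendsto_iso_iff {ι : Type*} {l : Filter ι} {g : ι → X ≃ᵢ X} {h : X ≃ᵢ X} :
    Tendsto g l (𝓝 h) ↔ ∀ x : X, Tendsto (fun i => g i x) l (𝓝 (h x)) := by
  constructor
  · intro H x
    have hc : Continuous (fun k : X ≃ᵢ X => k x) :=
      (continuous_apply x).comp continuous_induced_dom
    exact (hc.tendsto h).comp H
  · intro H
    rw [nhds_induced, tendsto_comap_iff, tendsto_pi_nhds]
    exact H

lemma exists_subseq_of_mapClusterPt [TopologicalSpace.SeparableSpace X]
    {g : ℕ → X ≃ᵢ X} {h : X ≃ᵢ X} (hc : MapClusterPt h atTop g) :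
    ∃ φ : ℕ → ℕ, StrictMono φ ∧ Tendsto (g ∘ φ) atTop (𝓝 h) := by
  rcases isEmpty_or_nonempty X with hX | hX
  · refine ⟨id, strictMono_id, ?_⟩
    rw [tendsto_iso_iff]
    intro x
    exact hX.elim x
  · set u := TopologicalSpace.denseSeq X with hu
    have key : ∀ N m : ℕ, ∃ n, m ≤ n ∧
        ∀ i ≤ N, dist (g n (u i)) (h (u i)) < 1 / (N + 1 : ℝ) := by
      intro N m
      have hev : ∀ᶠ k in 𝓝 h, ∀ i ≤ N, dist (k (u i)) (h (u i)) < 1 / (N + 1 : ℝ) := by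
        have hfin : (Set.Iic N).Finite := Set.finite_Iic N
        rw [show (∀ᶠ k in 𝓝 h, ∀ i ≤ N, dist (k (u i)) (h (u i)) < 1 / (N + 1 : ℝ)) ↔
            (∀ᶠ k in 𝓝 h, ∀ i ∈ Set.Iic N, dist (k (u i)) (h (u i)) < 1 / (N + 1 : ℝ)) from
          Iff.rfl, eventually_all_finite hfin]
        intro i _
        have hcont : Continuous (fun k : X ≃ᵢ X => k (u i)) :=
          (continuous_apply (u i)).comp continuous_induced_dom
        have hκ : Tendsto (fun k : X ≃ᵢ X => k (u i)) (𝓝 h) (𝓝 (h (u i))) :=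
          hcont.tendsto h
        have hball : Metric.ball (h (u i)) (1 / (N + 1 : ℝ)) ∈ 𝓝 (h (u i)) :=
          Metric.ball_mem_nhds _ (by positivity)
        filter_upwards [hκ hball] with k hk
        exact hk
      have hfreq : ∃ᶠ n in atTop, ∀ i ≤ N, dist (g n (u i)) (h (u i)) < 1 / (N + 1 : ℝ) :=
        mapClusterPt_iff_frequently.mp hc _ hev
      exact frequently_atTop.mp hfreq m
    choose n hn1 hn2 using key
    set φ : ℕ → ℕ := fun k => Nat.rec (n 0 0) (fun k ih => n (k + 1) (ih + 1)) k with hφ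
    have hφsucc : ∀ k, φ (k + 1) = n (k + 1) (φ k + 1) := fun k => rfl
    have hmono : StrictMono φ := by
      apply strictMono_nat_of_lt_succ
      intro k
      have := hn1 (k + 1) (φ k + 1)
      rw [hφsucc]
      omega
    have hprop : ∀ k, ∀ i ≤ k, dist (g (φ k) (u i)) (h (u i)) < 1 / (k + 1 : ℝ) := by
      intro k
      cases k with
      | zero => exact hn2 0 0
      | succ k => rw [hφsucc]; exact hn2 (k + 1) (φ k + 1)
    refine ⟨φ, hmono, ?_⟩
    rw [tendsto_iso_iff]
    intro x
    rw [Metric.tendsto_atTop]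
    intro ε hε
    obtain ⟨i, hi⟩ := (TopologicalSpace.denseRange_denseSeq X).exists_dist_lt x
      (show (0 : ℝ) < ε / 3 by linarith)
    obtain ⟨M, hM⟩ := exists_nat_one_div_lt (show (0 : ℝ) < ε / 3 by linarith)
    refine ⟨max i M, fun k hk => ?_⟩
    have hik : i ≤ k := le_trans (le_max_left i M) hk
    have hMk : M ≤ k := le_trans (le_max_right i M) hk
    have h1 : dist (g (φ k) x) (g (φ k) (u i)) = dist x (u i) := (g (φ k)).dist_eq x (u i)
    have h2 : dist (g (φ k) (u i)) (h (u i)) < 1 / (k + 1 : ℝ) := hprop k i hik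
    have h3 : dist (h (u i)) (h x) = dist x (u i) := by
      rw [h.dist_eq, dist_comm]
    have h4 : (1 : ℝ) / (k + 1) ≤ 1 / (M + 1) := by
      apply one_div_le_one_div_of_le (by positivity)
      exact_mod_cast Nat.succ_le_succ hMk
    calc dist ((g ∘ φ) k x) (h x)
        ≤ dist (g (φ k) x) (g (φ k) (u i)) + dist (g (φ k) (u i)) (h (u i)) +
          dist (h (u i)) (h x) := dist_triangle4 _ _ _ _
      _ < ε := by rw [h1, h3]; linarith

lemma DivergentSeq.divergentNet [TopologicalSpace.SeparableSpace X] {g : ℕ → X ≃ᵢ X}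
    (hg : DivergentSeq g) : DivergentNet g := by
  intro h hc
  obtain ⟨φ, hφ, ht⟩ := exists_subseq_of_mapClusterPt hc
  exact hg φ hφ h ht

lemma ellis_apply_coe_mem {f : Completion X → Completion X}
    (hf : f ∈ Ellis X) (x : X) : f ((x : X) : Completion X) ∈ XcupXl X := by
  have h1 : f ↑x ∈ closure ((fun F : Completion X → Completion X => F ↑x) '' hatIsoSet X) :=
    image_closure_subset_closure_image (continuous_apply ((x : X) : Completion X))
      ⟨f, hf, rfl⟩
  have h2 : ((fun F : Completion X → Completion X => F ↑x) '' hatIsoSet X) =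
      Set.range (fun g : X ≃ᵢ X => ((g x : X) : Completion X)) := by
    ext z
    constructor
    · rintro ⟨F, ⟨g, rfl⟩, rfl⟩
      exact ⟨g, (hatIso_coe g x).symm⟩
    · rintro ⟨g, rfl⟩
      exact ⟨hatIso g, ⟨g, rfl⟩, hatIso_coe g x⟩
  rw [h2] at h1
  obtain ⟨w, hw_mem, hw_tendsto⟩ := mem_closure_iff_seq_limit.mp h1
  choose gs hgs using hw_mem
  have hten : Tendsto (fun n => ((gs n x : X) : Completion X)) atTop (𝓝 (f ↑x)) := by
    have : (fun n => ((gs n x : X) : Completion X)) = w := funext hgs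
    rw [this]; exact hw_tendsto
  by_cases hd : DivergentSeq gs
  · right
    refine ⟨gs, x, hd, ?_, hten⟩
    have hc2 : Cauchy (Filter.map ((↑) : X → Completion X)
        (Filter.map (fun n => gs n x) atTop)) := by
      rw [Filter.map_map]
      exact hten.cauchySeq
    exact (Completion.coe_isometry.isUniformInducing.cauchy_map_iff).mp hc2
  · left
    rw [DivergentSeq] at hd
    push_neg at hd
    obtain ⟨φ, hφ, h, hh⟩ := hd
    refine ⟨h x, ?_⟩
    have hxx : Tendsto (fun n => gs (φ n) x) atTop (𝓝 (h x)) := tendsto_iso_iff.mp hh x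
    have hxc : Tendsto (fun n => ((gs (φ n) x : X) : Completion X)) atTop
        (𝓝 ((h x : X) : Completion X)) :=
      (Completion.continuous_coe X).tendsto (h x) |>.comp hxx
    have hxf : Tendsto (fun n => ((gs (φ n) x : X) : Completion X)) atTop (𝓝 (f ↑x)) :=
      hten.comp hφ.tendsto_atTop
    exact tendsto_nhds_unique hxc hxf

lemma ellis_comp_hatIso {f : Completion X → Completion X}
    (hf : f ∈ Ellis X) (g : X ≃ᵢ X) : f ∘ hatIso g ∈ Ellis X := by
  have hcont : Continuous (fun F : Completion X → Completion X => F ∘ hatIso g) :=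
    continuous_pi fun w => continuous_apply (hatIso g w)
  have hmaps : (fun F : Completion X → Completion X => F ∘ hatIso g) '' hatIsoSet X ⊆
      hatIsoSet X := by
    rintro _ ⟨F, ⟨k, rfl⟩, rfl⟩
    refine ⟨g.trans k, ?_⟩
    show Completion.map (⇑(g.trans k)) = hatIso k ∘ hatIso g
    have : ⇑(g.trans k) = ⇑k ∘ ⇑g := rfl
    rw [this]
    exact (Completion.map_comp k.isometry.uniformContinuous g.isometry.uniformContinuous).symm
  have h2 : (fun F : Completion X → Completion X => F ∘ hatIso g) '' closure (hatIsoSet X) ⊆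
      closure (hatIsoSet X) :=
    (image_closure_subset_closure_image hcont).trans (closure_mono hmaps)
  exact h2 ⟨f, hf, rfl⟩

instance : IsDirected (ULift.{v} ℕ) (· ≤ ·) :=
  ⟨fun a b => ⟨⟨max a.down b.down⟩, le_max_left _ _, le_max_right _ _⟩⟩

lemma map_uliftDown_atTop : Filter.map (ULift.down : ULift.{v} ℕ → ℕ) atTop = atTop := by
  exact OrderIso.map_atTop (⟨Equiv.ulift, Iff.rfl⟩ : ULift.{v} ℕ ≃o ℕ)

end Aux

/-- Lemma 5.11: the set `X ∪ X_l ⊆ X̂` is invariant under the Ellis semigroup `E`. -/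
theorem xcupXl_ellis_invariant (X : Type*) [MetricSpace X]
    [TopologicalSpace.SeparableSpace X] (hCI : IsoCauchyIndivisible X) :
    ∀ f ∈ Ellis X, ∀ y ∈ XcupXl X, f y ∈ XcupXl X := by
  intro f hf y hy
  rcases hy with ⟨x, rfl⟩ | ⟨g, x, hdiv, hcauchy, hy⟩
  · exact ellis_apply_coe_mem hf x
  · have hkey : ∀ w : X, Filter.map (fun i : ULift ℕ => g i.down w) atTop =
        Filter.map (fun n => g n w) atTop := by
      intro w
      rw [show (fun i : ULift ℕ => g i.down w) = (fun n => g n w) ∘ ULift.down from rfl,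
        ← Filter.map_map, map_uliftDown_atTop]
    have hdivU : DivergentNet (fun i : ULift ℕ => g i.down) := by
      intro h hc
      apply hdiv.divergentNet h
      rw [mapClusterPt_def] at hc ⊢
      rwa [show Filter.map (fun i : ULift ℕ => g i.down) atTop = Filter.map g atTop from by
        rw [show (fun i : ULift ℕ => g i.down) = g ∘ ULift.down from rfl,
          ← Filter.map_map, map_uliftDown_atTop]] at hc
    have hAll : ∀ z : X, CauchySeq (fun n => g n z) := by
      intro z
      have hres := hCI (ULift ℕ) (fun i => g i.down) hdivU
        ⟨x, by rw [hkey x]; exact hcauchy⟩ z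
      rw [hkey z] at hres
      exact hres
    have hCS : ∀ w : Completion X, CauchySeq (fun n => hatIso (g n) w) := by
      intro w
      rw [Metric.cauchySeq_iff]
      intro ε hε
      obtain ⟨z, hz⟩ : ∃ z : X, dist w ((z : X) : Completion X) < ε / 3 := by
        obtain ⟨z, hz⟩ := (Completion.denseRange_coe (α := X)).exists_dist_lt w
          (show (0 : ℝ) < ε / 3 by linarith)
        exact ⟨z, hz⟩
      have hcz : CauchySeq (fun n => ((g n z : X) : Completion X)) := by
        have hc2 : Cauchy (Filter.map ((↑) : X → Completion X)
            (Filter.map (fun n => g n z) atTop)) :=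
          (hAll z).map (Completion.uniformContinuous_coe X)
        rwa [Filter.map_map] at hc2
      obtain ⟨N, hN⟩ := Metric.cauchySeq_iff.mp hcz (ε / 3) (by linarith)
      refine ⟨N, fun m hm n hn => ?_⟩
      have e1 : dist (hatIso (g m) w) (hatIso (g m) ↑z) = dist w ↑z :=
        (hatIso_isometry (g m)).dist_eq w ↑z
      have e2 : dist (hatIso (g n) ↑z) (hatIso (g n) w) = dist w ↑z := by
        rw [(hatIso_isometry (g n)).dist_eq, dist_comm]
      have e3 : dist (hatIso (g m) ((z : X) : Completion X)) (hatIso (g n) ↑z) < ε / 3 := by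
        rw [hatIso_coe, hatIso_coe]
        exact hN m hm n hn
      calc dist (hatIso (g m) w) (hatIso (g n) w)
          ≤ dist (hatIso (g m) w) (hatIso (g m) ↑z) + dist (hatIso (g m) ↑z) (hatIso (g n) ↑z) +
            dist (hatIso (g n) ↑z) (hatIso (g n) w) := dist_triangle4 _ _ _ _
        _ < ε := by rw [e1, e2]; linarith
    have hlim : ∀ w : Completion X, ∃ l, Tendsto (fun n => hatIso (g n) w) atTop (𝓝 l) :=
      fun w => cauchySeq_tendsto_of_complete (hCS w)
    choose p hp using hlim
    have hpE : p ∈ Ellis X :=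
      mem_closure_of_tendsto (tendsto_pi_nhds.mpr hp)
        (Eventually.of_forall fun n => ⟨g n, rfl⟩)
    have hfc : Continuous f := (ellis_isometry hf).continuous
    have hfp : f ∘ p ∈ Ellis X := by
      have htend : Tendsto (fun n => f ∘ hatIso (g n)) atTop (𝓝 (f ∘ p)) :=
        tendsto_pi_nhds.mpr fun w => (hfc.tendsto (p w)).comp (hp w)
      exact (isClosed_closure (s := hatIsoSet X)).mem_of_tendsto htend
        (Eventually.of_forall fun n => ellis_comp_hatIso hf (g n))
    have hpx : p ((x : X) : Completion X) = y := by
      have h1 : Tendsto (fun n => hatIso (g n) ((x : X) : Completion X)) atTop (𝓝 y) := by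
        have : (fun n => hatIso (g n) ((x : X) : Completion X)) =
            fun n => ((g n x : X) : Completion X) := funext fun n => hatIso_coe (g n) x
        rw [this]; exact hy
      exact tendsto_nhds_unique (hp ↑x) h1
    have hmem := ellis_apply_coe_mem hfp x
    rw [show (f ∘ p) ((x : X) : Completion X) = f y by rw [Function.comp_apply, hpx]] at hmem
    exact hmem


end
end

section
/- Let (X,d) be a separable metric space such that the action (Iso(X),X) is Cauchy-indivisible. Then the map ω : E × (X ∪ X_p) → (X ∪ X_p) × X̂ defined by ω(f,y) = (y, f y) is a proper map. -/
open Filter Topology Set UniformSpace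

noncomputable section

namespace OmegaProperAux

variable {X : Type*} [MetricSpace X]

lemma hatIso_coe (g : X ≃ᵢ X) (x : X) :
    hatIso g (x : Completion X) = ((g x : X) : Completion X) :=
  Completion.map_coe g.isometry.uniformContinuous x

lemma hatIso_dist (g : X ≃ᵢ X) (a b : Completion X) :
    dist (hatIso g a) (hatIso g b) = dist a b :=
  (g.isometry.completion_map).dist_eq a b

lemma hatIso_mem_ellis (g : X ≃ᵢ X) : hatIso g ∈ Ellis X :=
  subset_closure ⟨g, rfl⟩

lemma ellis_dist {f : Completion X → Completion X} (hf : f ∈ Ellis X)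
    (a b : Completion X) : dist (f a) (f b) = dist a b := by
  have hclosed : IsClosed {u : Completion X → Completion X | dist (u a) (u b) = dist a b} :=
    isClosed_eq ((continuous_apply a).dist (continuous_apply b)) continuous_const
  refine closure_minimal ?_ hclosed hf
  rintro u ⟨g, rfl⟩
  exact hatIso_dist g a b

lemma ellis_comp {f p : Completion X → Completion X} (hf : f ∈ Ellis X) (hp : p ∈ Ellis X) :
    f ∘ p ∈ Ellis X := by
  have step1 : ∀ g : X ≃ᵢ X, hatIso g ∘ p ∈ Ellis X := by
    intro g
    have hc : Continuous fun u : Completion X → Completion X => hatIso g ∘ u := by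
      apply continuous_pi
      intro x
      exact (g.isometry.completion_map.continuous).comp (continuous_apply x)
    have himg : (fun u : Completion X → Completion X => hatIso g ∘ u) '' hatIsoSet X
        ⊆ hatIsoSet X := by
      rintro _ ⟨_, ⟨h, rfl⟩, rfl⟩
      refine ⟨h.trans g, ?_⟩
      show hatIso (h.trans g) = hatIso g ∘ hatIso h
      rw [hatIso, hatIso, hatIso,
        show ((h.trans g : X → X)) = (g : X → X) ∘ (h : X → X) from rfl,
        Completion.map_comp g.isometry.uniformContinuous h.isometry.uniformContinuous]
    have h1 : hatIso g ∘ p ∈ (fun u : Completion X → Completion X => hatIso g ∘ u) ''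
        closure (hatIsoSet X) := ⟨p, hp, rfl⟩
    have h2 := (image_closure_subset_closure_image hc) h1
    exact closure_mono himg h2
  have hc2 : Continuous fun u : Completion X → Completion X => u ∘ p := by
    apply continuous_pi
    intro x
    exact continuous_apply (p x)
  have h1 : f ∘ p ∈ (fun u : Completion X → Completion X => u ∘ p) ''
      closure (hatIsoSet X) := ⟨f, hf, rfl⟩
  have h2 := (image_closure_subset_closure_image hc2) h1
  have h3 : (fun u : Completion X → Completion X => u ∘ p) '' hatIsoSet X ⊆ Ellis X := by
    rintro _ ⟨_, ⟨g, rfl⟩, rfl⟩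
    exact step1 g
  have h4 := closure_mono h3 h2
  rwa [Ellis, closure_closure] at h4

lemma hatIso_apply_symm (g : X ≃ᵢ X) (a : Completion X) :
    hatIso g (hatIso g.symm a) = a := by
  have hid : (g : X → X) ∘ (g.symm : X → X) = id := funext fun x => g.apply_symm_apply x
  have h2 := Completion.map_comp g.isometry.uniformContinuous g.symm.isometry.uniformContinuous
  rw [hid, Completion.map_id] at h2
  calc hatIso g (hatIso g.symm a)
      = (Completion.map (g : X → X) ∘ Completion.map (g.symm : X → X)) a := rfl
    _ = id a := by rw [← h2]
    _ = a := rfl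

/-- Cauchyness at a dense set of points transfers to all points, for distance-preserving maps. -/
lemma cauchy_transfer {Y : Type*} [MetricSpace Y] {u : ℕ → Y → Y}
    (hu : ∀ n a b, dist (u n a) (u n b) = dist a b) {T : Set Y} (hT : Dense T)
    (h : ∀ t ∈ T, CauchySeq fun n => u n t) (a : Y) :
    CauchySeq fun n => u n a := by
  rw [Metric.cauchySeq_iff]
  intro ε hε
  obtain ⟨t, htT, htd⟩ := hT.exists_dist_lt a (by linarith : (0:ℝ) < ε/3)
  obtain ⟨N, hN⟩ := Metric.cauchySeq_iff.mp (h t htT) (ε/3) (by linarith)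
  refine ⟨N, fun m hm n hn => ?_⟩
  have h4 := dist_triangle4 (u m a) (u m t) (u n t) (u n a)
  rw [hu, hu] at h4
  have h5 := hN m hm n hn
  rw [dist_comm t a] at h4
  linarith

/-- Convergence at a dense set of points transfers to all points, for distance-preserving maps. -/
lemma conv_transfer {Y : Type*} [MetricSpace Y] {u : ℕ → Y → Y} {F : Y → Y}
    (hu : ∀ n a b, dist (u n a) (u n b) = dist a b)
    (hF : ∀ a b, dist (F a) (F b) = dist a b)
    {T : Set Y} (hT : Dense T)
    (h : ∀ t ∈ T, Tendsto (fun n => u n t) atTop (𝓝 (F t)))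
    (a : Y) : Tendsto (fun n => u n a) atTop (𝓝 (F a)) := by
  rw [Metric.tendsto_atTop]
  intro ε hε
  obtain ⟨t, htT, htd⟩ := hT.exists_dist_lt a (by linarith : (0:ℝ) < ε/3)
  obtain ⟨N, hN⟩ := Metric.tendsto_atTop.mp (h t htT) (ε/3) (by linarith)
  refine ⟨N, fun n hn => ?_⟩
  have h4 := dist_triangle4 (u n a) (u n t) (F t) (F a)
  rw [hu, hF] at h4
  have h5 := hN n hn
  rw [dist_comm t a] at h4
  linarith

lemma inducing_isoCoe : Topology.IsInducing (fun σ : X ≃ᵢ X => (σ : X → X)) := ⟨rfl⟩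

lemma isoTendsto_iff {ι : Type*} {l : Filter ι} {σ : ι → X ≃ᵢ X} {h : X ≃ᵢ X} :
    Tendsto σ l (𝓝 h) ↔ ∀ x, Tendsto (fun i => σ i x) l (𝓝 (h x)) := by
  rw [inducing_isoCoe.tendsto_nhds_iff]
  exact tendsto_pi_nhds

lemma cluster_subseq (t : ℕ → X) (ht : DenseRange t) {g : ℕ → X ≃ᵢ X} {h : X ≃ᵢ X}
    (hcl : MapClusterPt h atTop g) :
    ∃ φ : ℕ → ℕ, StrictMono φ ∧ Tendsto (g ∘ φ) atTop (𝓝 h) := by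
  have hU : ∀ j : ℕ, ∀ N : ℕ, ∃ n, N ≤ n ∧
      ∀ k ≤ j, dist (g n (t k)) (h (t k)) < 1/((j:ℝ)+1) := by
    intro j N
    have hopen : IsOpen {u : X → X | ∀ k ≤ j, dist (u (t k)) (h (t k)) < 1/((j:ℝ)+1)} := by
      have heq : {u : X → X | ∀ k ≤ j, dist (u (t k)) (h (t k)) < 1/((j:ℝ)+1)} =
          ⋂ k ∈ Finset.range (j+1), {u : X → X | dist (u (t k)) (h (t k)) < 1/((j:ℝ)+1)} := by
        ext u
        simp [Nat.lt_succ_iff]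
      rw [heq]
      exact isOpen_biInter_finset fun k _ =>
        isOpen_lt ((continuous_apply (t k)).dist continuous_const) continuous_const
    have hmemPi : {u : X → X | ∀ k ≤ j, dist (u (t k)) (h (t k)) < 1/((j:ℝ)+1)}
        ∈ 𝓝 (h : X → X) := by
      refine hopen.mem_nhds ?_
      intro k _
      simpa using (by positivity : (0:ℝ) < 1/((j:ℝ)+1))
    have hmem : {σ : X ≃ᵢ X | ∀ k ≤ j, dist (σ (t k)) (h (t k)) < 1/((j:ℝ)+1)} ∈ 𝓝 h :=
      inducing_isoCoe.continuous.continuousAt.preimage_mem_nhds hmemPi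
    have hfreq := (mapClusterPt_iff_frequently.mp hcl) _ hmem
    rcases frequently_atTop.mp hfreq N with ⟨n, hn1, hn2⟩
    exact ⟨n, hn1, hn2⟩
  choose! ν hν1 hν2 using hU
  let φ : ℕ → ℕ := fun j => Nat.rec (ν 0 0) (fun j ih => ν (j+1) (ih+1)) j
  have hφ0 : φ 0 = ν 0 0 := rfl
  have hφsucc : ∀ j, φ (j+1) = ν (j+1) (φ j + 1) := fun j => rfl
  have hφmono : StrictMono φ := by
    apply strictMono_nat_of_lt_succ
    intro j
    have := hν1 (j+1) (φ j + 1)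
    rw [hφsucc]
    omega
  have hφprop : ∀ j, ∀ k ≤ j, dist (g (φ j) (t k)) (h (t k)) < 1/((j:ℝ)+1) := by
    intro j
    cases j with
    | zero => exact hν2 0 0
    | succ j => rw [hφsucc]; exact hν2 (j+1) (φ j + 1)
  have hconv_t : ∀ k, Tendsto (fun j => g (φ j) (t k)) atTop (𝓝 (h (t k))) := by
    intro k
    rw [Metric.tendsto_atTop]
    intro ε hε
    obtain ⟨J, hJ⟩ := exists_nat_gt (1/ε)
    refine ⟨max k J, fun j hj => ?_⟩
    have hk : k ≤ j := le_trans (le_max_left _ _) hj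
    have h1 := hφprop j k hk
    have hJj : (J:ℝ) ≤ (j:ℝ) := by exact_mod_cast le_trans (le_max_right _ _) hj
    have h2 : 1/((j:ℝ)+1) < ε := by
      rw [div_lt_iff₀ (by positivity)]
      have h3 : 1/ε < (j:ℝ)+1 := by linarith
      calc (1:ℝ) = ε * (1/ε) := by field_simp
        _ < ε * ((j:ℝ)+1) := by exact mul_lt_mul_of_pos_left h3 hε
    linarith
  refine ⟨φ, hφmono, ?_⟩
  rw [isoTendsto_iff]
  intro x
  have : ∀ y ∈ Set.range t, Tendsto (fun j => g (φ j) y) atTop (𝓝 (h y)) := by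
    rintro _ ⟨k, rfl⟩
    exact hconv_t k
  exact conv_transfer (fun j a b => (g (φ j)).dist_eq a b) (fun a b => h.dist_eq a b)
    ht this x

lemma divergentSeq_divergentNet (t : ℕ → X) (ht : DenseRange t) {g : ℕ → X ≃ᵢ X}
    (h : DivergentSeq g) : DivergentNet g := by
  intro h₀ hcl
  obtain ⟨φ, hmono, htend⟩ := cluster_subseq t ht hcl
  exact h φ hmono h₀ htend

lemma divergentSeq_symm {g : ℕ → X ≃ᵢ X} (h : DivergentSeq g) :
    DivergentSeq (fun n => (g n).symm) := by
  intro φ hφ h₀ htend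
  apply h φ hφ h₀.symm
  rw [isoTendsto_iff] at htend ⊢
  intro x
  rw [tendsto_iff_dist_tendsto_zero]
  have key : ∀ j, dist ((g ∘ φ) j x) (h₀.symm x) =
      dist x ((g (φ j)).symm (h₀.symm x)) := by
    intro j
    conv_lhs => rw [← (g (φ j)).symm.dist_eq]
    simp
  simp only [key]
  have h1 : Tendsto (fun j => (g (φ j)).symm (h₀.symm x)) atTop (𝓝 (h₀ (h₀.symm x))) :=
    htend (h₀.symm x)
  have h2 : Tendsto (fun j => dist x ((g (φ j)).symm (h₀.symm x))) atTop
      (𝓝 (dist x (h₀ (h₀.symm x)))) := tendsto_const_nhds.dist h1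
  simpa using h2

lemma map_ulift_down_atTop : Filter.map (ULift.down.{u_ul} : ULift ℕ → ℕ) atTop = atTop := by
  have hdown : Tendsto (ULift.down.{u_ul} : ULift ℕ → ℕ) atTop atTop :=
    tendsto_atTop_atTop_of_monotone (fun a b h => h) (fun b => ⟨ULift.up b, le_refl b⟩)
  have hup : Tendsto (ULift.up.{u_ul} : ℕ → ULift ℕ) atTop atTop :=
    tendsto_atTop_atTop_of_monotone (fun a b h => h) (fun b => ⟨b.down, le_refl b⟩)
  refine le_antisymm hdown ?_
  have : atTop = Filter.map (ULift.down.{u_ul} : ULift ℕ → ℕ)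
      (Filter.map (ULift.up.{u_ul}) atTop) := by
    rw [Filter.map_map]
    exact (Filter.map_id).symm
  rw [this]
  exact Filter.map_mono hup

lemma hCI_nat (hCI : IsoCauchyIndivisible X) (g : ℕ → X ≃ᵢ X) (hdiv : DivergentNet g)
    (hex : ∃ x : X, CauchySeq fun n => g n x) (y : X) : CauchySeq fun n => g n y := by
  obtain ⟨x, hc⟩ := hex
  have hmap : ∀ z : X, Filter.map (fun i : ULift ℕ => g i.down z) atTop =
      Filter.map (fun n => g n z) atTop := by
    intro z
    rw [show (fun i : ULift ℕ => g i.down z) = (fun n => g n z) ∘ ULift.down from rfl,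
      ← Filter.map_map, map_ulift_down_atTop]
  have hdiv' : DivergentNet (fun i : ULift ℕ => g i.down) := by
    intro h hclu
    apply hdiv h
    rw [MapClusterPt] at hclu ⊢
    rwa [show Filter.map (fun i : ULift ℕ => g i.down) atTop =
      Filter.map g atTop by
        rw [show (fun i : ULift ℕ => g i.down) = g ∘ ULift.down from rfl,
          ← Filter.map_map, map_ulift_down_atTop]] at hclu
  have := hCI (ULift ℕ) (fun i => g i.down) hdiv'
    ⟨x, by rw [hmap x]; exact hc⟩ y
  rw [hmap y] at this
  exact this


lemma divergent_limit (hCI : IsoCauchyIndivisible X) {g : ℕ → X ≃ᵢ X}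
    (hdiv : DivergentNet g) {x₀ : X} (hc : CauchySeq fun n => g n x₀) :
    ∃ F ∈ Ellis X, ∀ a : Completion X, Tendsto (fun n => hatIso (g n) a) atTop (𝓝 (F a)) := by
  have hall : ∀ y : X, CauchySeq fun n => g n y := fun y => hCI_nat hCI g hdiv ⟨x₀, hc⟩ y
  have hallC : ∀ a : Completion X, CauchySeq fun n => hatIso (g n) a := by
    apply cauchy_transfer (fun n => hatIso_dist (g n))
      (Completion.denseRange_coe : DenseRange ((↑) : X → Completion X))
    rintro _ ⟨y, rfl⟩
    have : (fun n => hatIso (g n) (y : Completion X)) =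
        (((↑) : X → Completion X) ∘ fun n => g n y) := by
      funext n
      exact hatIso_coe (g n) y
    rw [this]
    exact (Completion.uniformContinuous_coe X).comp_cauchySeq (hall y)
  choose F hF using fun a => cauchySeq_tendsto_of_complete (hallC a)
  refine ⟨F, ?_, hF⟩
  exact mem_closure_of_tendsto (tendsto_pi_nhds.mpr hF)
    (Eventually.of_forall fun n => ⟨g n, rfl⟩)

lemma iso_seq_subconv (hCI : IsoCauchyIndivisible X) (t : ℕ → X) (ht : DenseRange t)
    (g : ℕ → X ≃ᵢ X) (x₀ : X) (hc : CauchySeq fun n => g n x₀) :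
    ∃ F ∈ Ellis X, ∃ φ : ℕ → ℕ, StrictMono φ ∧
      ∀ a, Tendsto (fun j => hatIso (g (φ j)) a) atTop (𝓝 (F a)) := by
  by_cases hdiv : DivergentNet g
  · obtain ⟨F, hFE, hF⟩ := divergent_limit hCI hdiv hc
    exact ⟨F, hFE, id, strictMono_id, hF⟩
  · rw [DivergentNet] at hdiv
    push_neg at hdiv
    obtain ⟨h₀, hcl⟩ := hdiv
    obtain ⟨φ, hmono, htend⟩ := cluster_subseq t ht hcl
    refine ⟨hatIso h₀, hatIso_mem_ellis h₀, φ, hmono, ?_⟩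
    have hx : ∀ x : X, Tendsto (fun j => g (φ j) x) atTop (𝓝 (h₀ x)) := by
      have := isoTendsto_iff.mp htend
      exact this
    apply conv_transfer (fun j => hatIso_dist (g (φ j))) (hatIso_dist h₀)
      (Completion.denseRange_coe : DenseRange ((↑) : X → Completion X))
    rintro _ ⟨x, rfl⟩
    have heq : (fun j => hatIso (g (φ j)) (x : Completion X)) =
        fun j => ((g (φ j) x : X) : Completion X) := by
      funext j
      exact hatIso_coe (g (φ j)) x
    rw [heq, hatIso_coe]
    exact ((Completion.continuous_coe X).tendsto (h₀ x)).comp (hx x)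

lemma seqA_base (hCI : IsoCauchyIndivisible X) (t : ℕ → X) (ht : DenseRange t)
    (s : ℕ → Completion X) (hs : DenseRange s)
    (f : ℕ → Completion X → Completion X) (hf : ∀ n, f n ∈ Ellis X) (x₀ : X)
    (hc : CauchySeq fun n => f n ((x₀ : X) : Completion X)) :
    ∃ F ∈ Ellis X, ∃ φ : ℕ → ℕ, StrictMono φ ∧
      ∀ a, Tendsto (fun j => f (φ j) a) atTop (𝓝 (F a)) := by
  have happrox : ∀ n : ℕ, ∃ g : X ≃ᵢ X,
      dist (hatIso g ((x₀:X) : Completion X)) (f n ((x₀:X):Completion X)) < 1/((n:ℝ)+1) ∧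
      ∀ k ≤ n, dist (hatIso g (s k)) (f n (s k)) < 1/((n:ℝ)+1) := by
    intro n
    have hWopen : IsOpen ({u : Completion X → Completion X |
        dist (u ((x₀:X):Completion X)) (f n ((x₀:X):Completion X)) < 1/((n:ℝ)+1)} ∩
        ⋂ k ∈ Finset.range (n+1),
          {u : Completion X → Completion X | dist (u (s k)) (f n (s k)) < 1/((n:ℝ)+1)}) := by
      apply IsOpen.inter
      · exact isOpen_lt ((continuous_apply _).dist continuous_const) continuous_const
      · exact isOpen_biInter_finset fun k _ =>
          isOpen_lt ((continuous_apply _).dist continuous_const) continuous_const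
    have hWmem : _ ∈ 𝓝 (f n) := hWopen.mem_nhds (by
      constructor
      · simpa using (by positivity : (0:ℝ) < 1/((n:ℝ)+1))
      · simp only [Set.mem_iInter]
        intro k _
        simpa using (by positivity : (0:ℝ) < 1/((n:ℝ)+1)))
    obtain ⟨u, huW, huS⟩ := mem_closure_iff_nhds.mp (hf n) _ hWmem
    obtain ⟨g, rfl⟩ := huS
    refine ⟨g, huW.1, fun k hk => ?_⟩
    have := Set.mem_iInter.mp huW.2 k
    rw [Set.mem_iInter] at this
    exact this (Finset.mem_range.mpr (Nat.lt_succ_of_le hk))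
  choose g hg1 hg2 using happrox
  have hinv : ∀ (N : ℕ) (ε : ℝ), 0 < ε → (4:ℝ)/ε < N → ∀ p ≥ N, 1/((p:ℝ)+1) < ε/4 := by
    intro N ε hε hN p hp
    have hpN : (N:ℝ) ≤ (p:ℝ) := by exact_mod_cast hp
    rw [div_lt_iff₀ (by positivity)]
    rw [div_lt_iff₀ hε] at hN
    calc (1:ℝ) = (ε/4) * (4/ε) := by field_simp
      _ < (ε/4) * ((p:ℝ)+1) := by
          apply mul_lt_mul_of_pos_left _ (by positivity)
          have : (4:ℝ)/ε < (N:ℝ) := by rw [div_lt_iff₀ hε]; linarith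
          linarith
  have hgc : CauchySeq fun n => g n x₀ := by
    rw [Metric.cauchySeq_iff]
    intro ε hε
    obtain ⟨N1, hN1⟩ := Metric.cauchySeq_iff.mp hc (ε/2) (by linarith)
    obtain ⟨N2, hN2⟩ := exists_nat_gt ((4:ℝ)/ε)
    refine ⟨max N1 N2, fun m hm n hn => ?_⟩
    have hdm : dist (g m x₀) (g n x₀) =
        dist (hatIso (g m) ((x₀:X):Completion X)) (hatIso (g n) ((x₀:X):Completion X)) := by
      rw [hatIso_coe, hatIso_coe, Completion.dist_eq]
    rw [hdm]
    have h4 := dist_triangle4 (hatIso (g m) ((x₀:X):Completion X)) (f m ((x₀:X):Completion X))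
      (f n ((x₀:X):Completion X)) (hatIso (g n) ((x₀:X):Completion X))
    have b1 := hg1 m
    have b2 := hg1 n
    have b3 := hN1 m (le_trans (le_max_left _ _) hm) n (le_trans (le_max_left _ _) hn)
    have b4 := hinv N2 ε hε hN2 m (le_trans (le_max_right _ _) hm)
    have b5 := hinv N2 ε hε hN2 n (le_trans (le_max_right _ _) hn)
    rw [dist_comm (f n ((x₀:X):Completion X)) (hatIso (g n) ((x₀:X):Completion X))] at h4
    linarith
  obtain ⟨F, hFE, φ, hmono, hFconv⟩ := iso_seq_subconv hCI t ht g x₀ hgc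
  have hsk : ∀ k, Tendsto (fun j => f (φ j) (s k)) atTop (𝓝 (F (s k))) := by
    intro k
    rw [tendsto_iff_dist_tendsto_zero]
    apply squeeze_zero' (Eventually.of_forall fun j => dist_nonneg)
      (g := fun j => 1/((φ j:ℝ)+1) + dist (hatIso (g (φ j)) (s k)) (F (s k)))
    · filter_upwards [eventually_ge_atTop k] with j hj
      have htr := dist_triangle (f (φ j) (s k)) (hatIso (g (φ j)) (s k)) (F (s k))
      have happ := hg2 (φ j) k (le_trans hj hmono.le_apply)
      rw [dist_comm (hatIso (g (φ j)) (s k)) (f (φ j) (s k))] at happ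
      linarith
    · have h1 : Tendsto (fun j => 1/((φ j:ℝ)+1)) atTop (𝓝 0) :=
        tendsto_one_div_add_atTop_nhds_zero_nat.comp hmono.tendsto_atTop
      have h2 : Tendsto (fun j => dist (hatIso (g (φ j)) (s k)) (F (s k))) atTop (𝓝 0) :=
        tendsto_iff_dist_tendsto_zero.mp (hFconv (s k))
      simpa using h1.add h2
  refine ⟨F, hFE, φ, hmono, ?_⟩
  apply conv_transfer (fun j => ellis_dist (hf (φ j))) (ellis_dist hFE) hs
  rintro _ ⟨k, rfl⟩
  exact hsk k

lemma seqA (hCI : IsoCauchyIndivisible X) (t : ℕ → X) (ht : DenseRange t)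
    (s : ℕ → Completion X) (hs : DenseRange s)
    (f : ℕ → Completion X → Completion X) (hf : ∀ n, f n ∈ Ellis X)
    {y₀ : Completion X} (hy₀ : y₀ ∈ XcupXp X) (hc : CauchySeq fun n => f n y₀) :
    ∃ F ∈ Ellis X, ∃ φ : ℕ → ℕ, StrictMono φ ∧
      ∀ a, Tendsto (fun j => f (φ j) a) atTop (𝓝 (F a)) := by
  rcases hy₀ with ⟨x₀, rfl⟩ | hXp
  · exact seqA_base hCI t ht s hs f hf x₀ hc
  · obtain ⟨g', x, hdiv, hc1, hc2, hlim⟩ := hXp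
    have hdivnet : DivergentNet g' := divergentSeq_divergentNet t ht hdiv
    obtain ⟨p, hpE, hp⟩ := divergent_limit hCI hdivnet hc1
    have hdivnet2 : DivergentNet (fun n => (g' n).symm) :=
      divergentSeq_divergentNet t ht (divergentSeq_symm hdiv)
    obtain ⟨q, hqE, hq⟩ := divergent_limit hCI hdivnet2 hc2
    have hpq : ∀ a : Completion X, p (q a) = a := by
      intro a
      have h1 : Tendsto (fun n => hatIso (g' n) (hatIso (g' n).symm a)) atTop (𝓝 (p (q a))) := by
        rw [tendsto_iff_dist_tendsto_zero]
        apply squeeze_zero (fun n => dist_nonneg)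
          (g := fun n => dist (hatIso (g' n).symm a) (q a) + dist (hatIso (g' n) (q a)) (p (q a)))
        · intro n
          have htr := dist_triangle (hatIso (g' n) (hatIso (g' n).symm a))
            (hatIso (g' n) (q a)) (p (q a))
          rw [hatIso_dist] at htr
          linarith
        · have b1 : Tendsto (fun n => dist (hatIso (g' n).symm a) (q a)) atTop (𝓝 0) :=
            tendsto_iff_dist_tendsto_zero.mp (hq a)
          have b2 : Tendsto (fun n => dist (hatIso (g' n) (q a)) (p (q a))) atTop (𝓝 0) :=
            tendsto_iff_dist_tendsto_zero.mp (hp (q a))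
          simpa using b1.add b2
      have h2 : Tendsto (fun n => hatIso (g' n) (hatIso (g' n).symm a)) atTop (𝓝 a) := by
        have : (fun n => hatIso (g' n) (hatIso (g' n).symm a)) = fun _ => a :=
          funext fun n => hatIso_apply_symm (g' n) a
        rw [this]
        exact tendsto_const_nhds
      exact tendsto_nhds_unique h1 h2
    have hpx : p ((x:X) : Completion X) = y₀ := by
      have h1 : Tendsto (fun n => ((g' n x : X) : Completion X)) atTop
          (𝓝 (p ((x:X) : Completion X))) := by
        have heq : (fun n => ((g' n x : X) : Completion X)) =
            fun n => hatIso (g' n) ((x:X) : Completion X) :=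
          funext fun n => (hatIso_coe (g' n) x).symm
        rw [heq]
        exact hp _
      exact tendsto_nhds_unique h1 hlim
    have hcomp : ∀ n, f n ∘ p ∈ Ellis X := fun n => ellis_comp (hf n) hpE
    have hc' : CauchySeq fun n => (f n ∘ p) ((x : X) : Completion X) := by
      have heq : (fun n => (f n ∘ p) ((x:X):Completion X)) = fun n => f n y₀ := by
        funext n
        show f n (p ((x:X):Completion X)) = f n y₀
        rw [hpx]
      rw [heq]
      exact hc
    obtain ⟨F, hFE, φ, hmono, hFconv⟩ := seqA_base hCI t ht s hs _ hcomp x hc'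
    refine ⟨F ∘ q, ellis_comp hFE hqE, φ, hmono, fun a => ?_⟩
    have hQ := hFconv (q a)
    have heq : (fun j => (f (φ j) ∘ p) (q a)) = fun j => f (φ j) a := by
      funext j
      show f (φ j) (p (q a)) = f (φ j) a
      rw [hpq]
    rw [heq] at hQ
    exact hQ

lemma inducing_PhiE (s : ℕ → Completion X) (hs : DenseRange s) :
    Topology.IsInducing (fun f : ↥(Ellis X) =>
      (fun n => (f : Completion X → Completion X) (s n) : ℕ → Completion X)) := by
  set Φ : ↥(Ellis X) → (ℕ → Completion X) :=
    fun f => fun n => (f : Completion X → Completion X) (s n) with hΦdef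
  have hΦcont : Continuous Φ := by
    apply continuous_pi
    intro n
    exact (continuous_apply (s n)).comp continuous_subtype_val
  rw [isInducing_iff_nhds]
  intro f
  apply le_antisymm
  · exact tendsto_iff_comap.mp (hΦcont.tendsto f)
  · rw [nhds_subtype_eq_comap, ← map_le_iff_le_comap]
    conv_rhs => rw [nhds_pi]
    rw [Filter.le_pi]
    intro a
    rw [tendsto_map'_iff]
    show Tendsto (fun g : ↥(Ellis X) => (g : Completion X → Completion X) a)
      (comap Φ (𝓝 (Φ f))) (𝓝 ((f : Completion X → Completion X) a))
    rw [Metric.tendsto_nhds]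
    intro ε hε
    obtain ⟨n, hn⟩ := hs.exists_dist_lt a (show (0:ℝ) < ε/3 by linarith)
    have hmem : {u : ℕ → Completion X |
        dist (u n) ((f : Completion X → Completion X) (s n)) < ε/3} ∈ 𝓝 (Φ f) := by
      have hop : IsOpen {u : ℕ → Completion X |
          dist (u n) ((f : Completion X → Completion X) (s n)) < ε/3} :=
        isOpen_lt ((continuous_apply n).dist continuous_const) continuous_const
      refine hop.mem_nhds ?_
      show dist ((f : Completion X → Completion X) (s n))
        ((f : Completion X → Completion X) (s n)) < ε/3
      simpa using (by linarith : (0:ℝ) < ε/3)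
    filter_upwards [preimage_mem_comap hmem] with g hg
    have hg' : dist ((g : Completion X → Completion X) (s n))
        ((f : Completion X → Completion X) (s n)) < ε/3 := hg
    have h4 := dist_triangle4 ((g : Completion X → Completion X) a)
      ((g : Completion X → Completion X) (s n))
      ((f : Completion X → Completion X) (s n)) ((f : Completion X → Completion X) a)
    rw [ellis_dist g.2, ellis_dist f.2, dist_comm (s n) a] at h4
    linarith

end OmegaProperAux

/-- Theorem 5.12 (properness part): the map
`ω : E × (X ∪ X_p) → (X ∪ X_p) × X̂`, `ω(f, y) = (y, f y)`, is a proper map. -/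
theorem omega_isProperMap_on_XcupXp (X : Type*) [MetricSpace X]
    [TopologicalSpace.SeparableSpace X] (hCI : IsoCauchyIndivisible X) :
    IsProperMap (fun p : ↥(Ellis X) × ↥(XcupXp X) =>
      (p.2, (p.1 : Completion X → Completion X) (p.2 : Completion X))) := by
  classical
  open OmegaProperAux in
  rcases isEmpty_or_nonempty X with hX | hX
  · -- the degenerate case of empty `X`
    have hCemp : IsEmpty (Completion X) := by
      have h1 : DenseRange ((↑) : X → Completion X) := Completion.denseRange_coe
      have h2 : Set.range ((↑) : X → Completion X) = ∅ := Set.range_eq_empty _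
      rw [DenseRange, h2] at h1
      have h3 : (∅ : Set (Completion X)) = Set.univ := by
        rw [← closure_empty]
        exact h1.closure_eq
      constructor
      intro a
      have : a ∈ (∅ : Set (Completion X)) := by rw [h3]; trivial
      exact this
    haveI : IsEmpty ↥(XcupXp X) := ⟨fun y => hCemp.false y.1⟩
    haveI : IsEmpty (↥(Ellis X) × ↥(XcupXp X)) := ⟨fun p => ‹IsEmpty ↥(XcupXp X)›.false p.2⟩
    rw [isProperMap_iff_ultrafilter]
    constructor
    · have hop : ∀ V : Set (↥(Ellis X) × ↥(XcupXp X)), IsOpen V := fun V => by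
        rw [Set.eq_empty_of_isEmpty V]
        exact isOpen_empty
      exact continuous_def.mpr fun U _ => hop _
    · intro 𝒰 y _
      exact absurd (Filter.filter_eq_bot_of_isEmpty (𝒰 : Filter (↥(Ellis X) × ↥(XcupXp X))))
        𝒰.neBot'.ne
  · -- the main case
    obtain ⟨t, ht⟩ := TopologicalSpace.exists_dense_seq X
    haveI : Nonempty (Completion X) := ⟨((Classical.arbitrary X : X) : Completion X)⟩
    obtain ⟨s, hs⟩ := TopologicalSpace.exists_dense_seq (Completion X)
    have hΦ := inducing_PhiE (X := X) s hs
    set Φ : ↥(Ellis X) → (ℕ → Completion X) :=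
      fun f => fun n => (f : Completion X → Completion X) (s n) with hΦdef
    rw [isProperMap_iff_isClosedMap_and_compact_fibers]
    have hev : Continuous fun p : ↥(Ellis X) × ↥(XcupXp X) =>
        (p.1 : Completion X → Completion X) (p.2 : Completion X) := by
      rw [continuous_iff_continuousAt]
      rintro ⟨f₀, y₀⟩
      rw [ContinuousAt, Metric.tendsto_nhds]
      intro ε hε
      have h1 : Tendsto (fun p : ↥(Ellis X) × ↥(XcupXp X) => ((p.2 : Completion X)))
          (𝓝 (f₀, y₀)) (𝓝 (y₀ : Completion X)) :=
        (continuous_subtype_val.comp continuous_snd).continuousAt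
      have h2 : Tendsto (fun p : ↥(Ellis X) × ↥(XcupXp X) =>
          (p.1 : Completion X → Completion X) ((y₀ : Completion X)))
          (𝓝 (f₀, y₀)) (𝓝 ((f₀ : Completion X → Completion X) (y₀ : Completion X))) :=
        (((continuous_apply ((y₀ : Completion X))).comp continuous_subtype_val).comp
          continuous_fst).continuousAt
      filter_upwards [Metric.tendsto_nhds.mp h1 (ε/2) (by linarith),
        Metric.tendsto_nhds.mp h2 (ε/2) (by linarith)] with p hp1 hp2
      have htr := dist_triangle ((p.1 : Completion X → Completion X) (p.2 : Completion X))
        ((p.1 : Completion X → Completion X) (y₀ : Completion X))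
        ((f₀ : Completion X → Completion X) (y₀ : Completion X))
      rw [ellis_dist p.1.2] at htr
      linarith
    refine ⟨continuous_snd.prodMk hev, ?_, ?_⟩
    · -- closed map
      intro C hC
      apply IsSeqClosed.isClosed
      rintro u ⟨w, z₀⟩ hu hL
      choose pc hpcC hpc using hu
      have hy : Tendsto (fun n => (pc n).2) atTop (𝓝 w) := by
        have h1 : Tendsto (Prod.fst ∘ u) atTop (𝓝 w) :=
          (continuous_fst.tendsto (((w, z₀)) : ↥(XcupXp X) × Completion X)).comp hL
        have heq : (fun n => (pc n).2) = Prod.fst ∘ u := by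
          funext n
          simp only [Function.comp_apply]
          rw [← hpc n]
        rw [heq]
        exact h1
      have hz : Tendsto (fun n => ((pc n).1 : Completion X → Completion X)
          ((pc n).2 : Completion X)) atTop (𝓝 z₀) := by
        have h1 : Tendsto (Prod.snd ∘ u) atTop (𝓝 z₀) :=
          (continuous_snd.tendsto (((w, z₀)) : ↥(XcupXp X) × Completion X)).comp hL
        have heq : (fun n => ((pc n).1 : Completion X → Completion X)
            ((pc n).2 : Completion X)) = Prod.snd ∘ u := by
          funext n
          simp only [Function.comp_apply]
          rw [← hpc n]
        rw [heq]
        exact h1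
      have hyval : Tendsto (fun n => (((pc n).2 : ↥(XcupXp X)) : Completion X)) atTop
          (𝓝 ((w : Completion X))) := (continuous_subtype_val.tendsto w).comp hy
      have hfy : Tendsto (fun n => ((pc n).1 : Completion X → Completion X)
          ((w : Completion X))) atTop (𝓝 z₀) := by
        rw [tendsto_iff_dist_tendsto_zero]
        apply squeeze_zero (fun n => dist_nonneg)
          (g := fun n => dist (((pc n).2 : ↥(XcupXp X)) : Completion X) ((w : Completion X)) +
            dist (((pc n).1 : Completion X → Completion X) ((pc n).2 : Completion X)) z₀)
        · intro n
          have htr := dist_triangle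
            (((pc n).1 : Completion X → Completion X) ((w : Completion X)))
            (((pc n).1 : Completion X → Completion X) ((pc n).2 : Completion X)) z₀
          rw [ellis_dist (pc n).1.2, dist_comm ((w : Completion X))] at htr
          linarith
        · have b1 : Tendsto (fun n => dist (((pc n).2 : ↥(XcupXp X)) : Completion X)
              ((w : Completion X))) atTop (𝓝 0) := tendsto_iff_dist_tendsto_zero.mp hyval
          have b2 := tendsto_iff_dist_tendsto_zero.mp hz
          simpa using b1.add b2
      obtain ⟨F, hFE, φ, hmono, hFconv⟩ := seqA hCI t ht s hs
        (fun n => ((pc n).1 : Completion X → Completion X)) (fun n => (pc n).1.2)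
        w.2 hfy.cauchySeq
      have hPfst : Tendsto (fun j => (pc (φ j)).1) atTop (𝓝 (⟨F, hFE⟩ : ↥(Ellis X))) := by
        rw [tendsto_subtype_rng]
        exact tendsto_pi_nhds.mpr fun a => hFconv a
      have hPsnd : Tendsto (fun j => (pc (φ j)).2) atTop (𝓝 w) :=
        hy.comp hmono.tendsto_atTop
      have hPtend : Tendsto (fun j => pc (φ j)) atTop
          (𝓝 ((⟨F, hFE⟩ : ↥(Ellis X)), w)) := by
        have heq : (fun j => pc (φ j)) = fun j => ((pc (φ j)).1, (pc (φ j)).2) := by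
          funext j
          exact Prod.mk.eta.symm
        rw [heq]
        exact hPfst.prodMk_nhds hPsnd
      have hPC : ((⟨F, hFE⟩ : ↥(Ellis X)), w) ∈ C :=
        hC.mem_of_tendsto hPtend (Eventually.of_forall fun j => hpcC (φ j))
      refine ⟨((⟨F, hFE⟩ : ↥(Ellis X)), w), hPC, ?_⟩
      have hFw : F ((w : Completion X)) = z₀ :=
        tendsto_nhds_unique (hFconv _) (hfy.comp hmono.tendsto_atTop)
      show ((w : ↥(XcupXp X)), F ((w : Completion X))) = (w, z₀)
      rw [hFw]
    · -- compact fibers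
      rintro ⟨w, z₀⟩
      have hset : (fun p : ↥(Ellis X) × ↥(XcupXp X) =>
            ((p.2 : ↥(XcupXp X)), (p.1 : Completion X → Completion X) (p.2 : Completion X)))
            ⁻¹' {(w, z₀)} =
          (fun f : ↥(Ellis X) => (f, w)) ''
            {f : ↥(Ellis X) | (f : Completion X → Completion X) ((w : Completion X)) = z₀} := by
        ext ⟨f, y⟩
        simp only [Set.mem_preimage, Set.mem_singleton_iff, Prod.mk.injEq, Set.mem_image,
          Set.mem_setOf_eq]
        constructor
        · rintro ⟨h1, h2⟩
          subst h1
          exact ⟨f, h2, rfl, rfl⟩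
        · rintro ⟨f', hf', h1, h2⟩
          subst h1
          subst h2
          exact ⟨rfl, hf'⟩
      rw [hset]
      apply IsCompact.image ?_ (continuous_id.prodMk continuous_const)
      rw [hΦ.isCompact_iff]
      apply IsSeqCompact.isCompact
      intro u hu
      choose f hfF hfu using hu
      have hcau : CauchySeq fun j => (f j : Completion X → Completion X)
          ((w : Completion X)) := by
        have heq : (fun j => (f j : Completion X → Completion X) ((w : Completion X))) =
            fun _ => z₀ := funext fun j => hfF j
        rw [heq]
        exact cauchySeq_const z₀
      obtain ⟨F, hFE, φ, hmono, hFconv⟩ := seqA hCI t ht s hs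
        (fun j => ((f j) : Completion X → Completion X)) (fun j => (f j).2) w.2 hcau
      have hFw : F ((w : Completion X)) = z₀ := by
        refine tendsto_nhds_unique (hFconv _) ?_
        have heq : (fun j => (f (φ j) : Completion X → Completion X) ((w : Completion X))) =
            fun _ => z₀ := funext fun j => hfF (φ j)
        rw [heq]
        exact tendsto_const_nhds
      refine ⟨Φ ⟨F, hFE⟩, ⟨⟨F, hFE⟩, hFw, rfl⟩, φ, hmono, ?_⟩
      have heq : u ∘ φ = fun j => Φ (f (φ j)) := funext fun j => (hfu (φ j)).symm
      rw [heq]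
      exact tendsto_pi_nhds.mpr fun n => hFconv (s n)


end
end

section
/- Let (X,d) be a separable metric space such that the action (Iso(X),X) is Cauchy-indivisible. If X_p ≠ ∅, then X*_p = X̂, where X*_p = { y ∈ X̂ : there exist a sequence {g_n} ⊆ Iso(X) with no convergent subsequence in Iso(X) and a point x ∈ X such that {g_n x} and {g_n^{-1} x} are Cauchy sequences, and y = [g_k x_k] for some Cauchy sequence {x_k} in X }. -/
open Filter Topology Set UniformSpace

noncomputable section

/-- The set `X*_p` of points `[g_k x_k]` for Cauchy sequences `(x_k)` in `X` and
divergent sequences `(g_n)` in `Iso(X)` such that `(g_n x)` and `(g_n⁻¹ x)` are Cauchy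
for some `x ∈ X`. -/
def XpStar (X : Type*) [MetricSpace X] : Set (Completion X) :=
  { y | ∃ (g : ℕ → X ≃ᵢ X) (x : X) (xs : ℕ → X), DivergentSeq g ∧
      CauchySeq (fun n => g n x) ∧ CauchySeq (fun n => (g n).symm x) ∧
      CauchySeq xs ∧
      Tendsto (fun k => ((g k (xs k) : X) : Completion X)) atTop (𝓝 y) }


lemma tendsto_iso_iff_pointwise {X : Type*} [MetricSpace X] {u : ℕ → X ≃ᵢ X} {h : X ≃ᵢ X} :
    Tendsto u atTop (𝓝 h) ↔ ∀ x, Tendsto (fun n => u n x) atTop (𝓝 (h x)) := by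
  have : (𝓝 h : Filter (X ≃ᵢ X)) = comap (fun g : X ≃ᵢ X => (g : X → X)) (𝓝 ⇑h) :=
    nhds_induced _ _
  rw [this, tendsto_comap_iff, tendsto_pi_nhds]
  rfl

lemma divergentNet_symm {X : Type*} [MetricSpace X] [TopologicalSpace.SeparableSpace X]
    [Nonempty X] {g : ℕ → X ≃ᵢ X} (hg : DivergentSeq g) :
    DivergentNet (fun n => (g n).symm) := by
  intro h hcl
  obtain ⟨D, hD⟩ := TopologicalSpace.exists_dense_seq X
  have hfreq : ∀ n : ℕ, ∃ᶠ k in atTop,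
      ∀ i ≤ n, dist ((g k).symm (D i)) (h (D i)) < 1 / (n + 1) := by
    intro n
    have hnhds : {F : X → X | ∀ i ≤ n, dist (F (D i)) (h (D i)) < 1 / (n + 1)} ∈ 𝓝 ⇑h := by
      have : ∀ i, i ≤ n → {F : X → X | dist (F (D i)) (h (D i)) < 1 / (n + 1)} ∈ 𝓝 ⇑h := by
        intro i _
        have hc : Continuous fun F : X → X => F (D i) := continuous_apply (D i)
        have := (hc.tendsto ⇑h).eventually
          (Metric.ball_mem_nhds (h (D i)) (by positivity : (0:ℝ) < 1 / (n + 1)))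
        exact this
      have h2 : ∀ᶠ F : X → X in 𝓝 ⇑h, ∀ i ∈ Set.Iic n, dist (F (D i)) (h (D i)) < 1 / (n + 1) :=
        (eventually_all_finite (Set.finite_Iic n)).mpr (fun i hi => this i hi)
      exact h2.mono (fun F hF i hi => hF i hi)
    have : (𝓝 h : Filter (X ≃ᵢ X)) = comap (fun g : X ≃ᵢ X => (g : X → X)) (𝓝 ⇑h) :=
      nhds_induced _ _
    have hmem : {f : X ≃ᵢ X | ∀ i ≤ n, dist (f (D i)) (h (D i)) < 1 / (n + 1)} ∈ 𝓝 h := by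
      rw [this, mem_comap]
      exact ⟨_, hnhds, fun f hf => hf⟩
    exact mapClusterPt_iff_frequently.mp hcl _ hmem
  obtain ⟨φ, hφ, hP⟩ := extraction_forall_of_frequently hfreq
  have hpt : ∀ x : X, Tendsto (fun n => (g (φ n)).symm x) atTop (𝓝 (h x)) := by
    intro x
    rw [Metric.tendsto_atTop]
    intro ε hε
    obtain ⟨i, hi⟩ := Metric.denseRange_iff.mp hD x (ε / 3) (by linarith)
    obtain ⟨n0, hn0⟩ := exists_nat_one_div_lt (show (0:ℝ) < ε / 3 by linarith)
    refine ⟨max i n0, fun n hn => ?_⟩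
    have h1 : dist ((g (φ n)).symm x) ((g (φ n)).symm (D i)) = dist x (D i) :=
      (g (φ n)).symm.isometry.dist_eq _ _
    have h2 : dist ((g (φ n)).symm (D i)) (h (D i)) < 1 / (n + 1) :=
      hP n i (le_trans (le_max_left _ _) hn)
    have h3 : dist (h (D i)) (h x) = dist (D i) x := h.isometry.dist_eq _ _
    have h4 : (1 : ℝ) / (n + 1) ≤ 1 / (n0 + 1) := by
      apply one_div_le_one_div_of_le (by positivity)
      exact_mod_cast Nat.succ_le_succ (le_trans (le_max_right _ _) hn)
    have := dist_triangle4 ((g (φ n)).symm x) ((g (φ n)).symm (D i)) (h (D i)) (h x)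
    have hd : dist x (D i) < ε / 3 := hi
    rw [h1, h3] at this
    rw [dist_comm (D i) x] at this
    calc dist ((g (φ n)).symm x) (h x)
        ≤ dist x (D i) + dist ((g (φ n)).symm (D i)) (h (D i)) + dist x (D i) := this
      _ < ε / 3 + ε / 3 + ε / 3 := by
          have := lt_of_lt_of_le h2 h4
          linarith [hn0, this]
      _ = ε := by ring
  have hconv : Tendsto (g ∘ φ) atTop (𝓝 h.symm) := by
    rw [tendsto_iso_iff_pointwise]
    intro x
    rw [tendsto_iff_dist_tendsto_zero]
    have key : ∀ n, dist ((g ∘ φ) n x) (h.symm x)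
        = dist x ((g (φ n)).symm (h.symm x)) := by
      intro n
      rw [← (g (φ n)).symm.isometry.dist_eq]
      simp
    simp_rw [key]
    have hlim := Filter.Tendsto.dist (tendsto_const_nhds (x := x)) (hpt (h.symm x))
    simpa using hlim
  exact hg φ hφ h.symm hconv

def uliftOrderIso : ULift.{u} ℕ ≃o ℕ :=
  { toEquiv := Equiv.ulift, map_rel_iff' := Iff.rfl }

lemma map_ulift_atTop {α : Type*} (f : ℕ → α) :
    map (fun i : ULift.{u} ℕ => f i.down) atTop = map f atTop := by
  have h1 : map (ULift.down : ULift.{u} ℕ → ℕ) atTop = atTop :=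
    (uliftOrderIso).map_atTop
  rw [← h1, Filter.map_map]
  rfl

/-- Assertion of Remark 5.14: if `X_p ≠ ∅` then `X*_p = X̂`. -/
theorem xpStar_eq_univ_of_Xp_nonempty (X : Type*) [MetricSpace X]
    [TopologicalSpace.SeparableSpace X] (hCI : IsoCauchyIndivisible X)
    (hne : (Xp X).Nonempty) :
    XpStar X = Set.univ := by
  obtain ⟨y0, g, x, hdiv, hC1, hC2, -⟩ := hne
  have hXne : Nonempty X := ⟨x⟩
  ext z
  simp only [Set.mem_univ, iff_true]
  have hdr : DenseRange ((↑) : X → Completion X) := Completion.denseRange_coe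
  have hz : ∀ k : ℕ, ∃ p : X, dist z ((p : X) : Completion X) < 1 / (k + 1) := fun k =>
    Metric.denseRange_iff.mp hdr z (1 / (k + 1)) (by positivity)
  choose zs hzs using hz
  have hzt : Tendsto (fun k => ((zs k : X) : Completion X)) atTop (𝓝 z) := by
    rw [tendsto_iff_dist_tendsto_zero]
    apply squeeze_zero (fun k => dist_nonneg)
      (fun k => le_of_lt (by rw [dist_comm]; exact hzs k))
    exact tendsto_one_div_add_atTop_nhds_zero_nat
  have hzc : CauchySeq zs := by
    have hc : CauchySeq (fun k => ((zs k : X) : Completion X)) := hzt.cauchySeq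
    rw [Metric.cauchySeq_iff] at hc ⊢
    intro ε hε
    obtain ⟨N, hN⟩ := hc ε hε
    exact ⟨N, fun m hm n hn => by
      have := hN m hm n hn
      rwa [Completion.dist_eq] at this⟩
  have hsd : DivergentNet (fun n => (g n).symm) := divergentNet_symm hdiv
  have hCIall : ∀ y : X, CauchySeq (fun n => (g n).symm y) := by
    intro y
    have hsd' : DivergentNet (fun i : ULift ℕ => (g i.down).symm) := by
      intro h hcl
      apply hsd h
      rw [MapClusterPt, ClusterPt] at hcl ⊢
      rwa [map_ulift_atTop (fun n => (g n).symm)] at hcl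
    have := hCI (ULift ℕ) (fun i : ULift ℕ => (g i.down).symm) hsd'
      ⟨x, by rw [map_ulift_atTop (fun n => (g n).symm x)]; exact hC2⟩ y
    rw [map_ulift_atTop (fun n => (g n).symm y)] at this
    exact this
  refine ⟨g, x, fun k => (g k).symm (zs k), hdiv, hC1, hC2, ?_, ?_⟩
  · rw [Metric.cauchySeq_iff]
    intro ε hε
    obtain ⟨N0, hN0⟩ := Metric.cauchySeq_iff.mp hzc (ε / 4) (by linarith)
    obtain ⟨N1, hN1⟩ := Metric.cauchySeq_iff.mp (hCIall (zs N0)) (ε / 4) (by linarith)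
    refine ⟨max N0 N1, fun m hm n hn => ?_⟩
    have hm0 : m ≥ N0 := le_trans (le_max_left _ _) hm
    have hn0 : n ≥ N0 := le_trans (le_max_left _ _) hn
    have hm1 : m ≥ N1 := le_trans (le_max_right _ _) hm
    have hn1 : n ≥ N1 := le_trans (le_max_right _ _) hn
    have t := dist_triangle4 ((g m).symm (zs m)) ((g m).symm (zs N0))
      ((g n).symm (zs N0)) ((g n).symm (zs n))
    have e1 : dist ((g m).symm (zs m)) ((g m).symm (zs N0)) = dist (zs m) (zs N0) :=
      (g m).symm.isometry.dist_eq _ _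
    have e2 : dist ((g n).symm (zs N0)) ((g n).symm (zs n)) = dist (zs N0) (zs n) :=
      (g n).symm.isometry.dist_eq _ _
    rw [e1, e2] at t
    have b1 : dist (zs m) (zs N0) < ε / 4 := hN0 m hm0 N0 le_rfl
    have b2 : dist ((g m).symm (zs N0)) ((g n).symm (zs N0)) < ε / 4 := hN1 m hm1 n hn1
    have b3 : dist (zs N0) (zs n) < ε / 4 := hN0 N0 le_rfl n hn0
    linarith
  · have heq : (fun k => ((g k ((g k).symm (zs k)) : X) : Completion X))
        = fun k => ((zs k : X) : Completion X) := by
      funext k; rw [IsometryEquiv.apply_symm_apply]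
    rw [heq]
    exact hzt

end
end

section
/- Let ℤ carry the discrete metric d (d(m,n) = 0 if m = n and d(m,n) = 1 otherwise), so that Iso(ℤ) is the group of all bijections of ℤ. Fix an enumeration {z_i} of ℤ and equip Iso(ℤ) with the metric ϱ(f,g) = Σ_{i=1}^∞ 3^{-i} d(f z_i, g z_i). Then for every surjective isometry T of (Iso(ℤ), ϱ) and every f ∈ Iso(ℤ), T(f) = T(e) ∘ f, where e is the identity of Iso(ℤ). -/
open Filter Topology

noncomputable section

/-- The discrete metric on `ℤ`. -/
def dZ (m n : ℤ) : ℝ := if m = n then 0 else 1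

/-- The metric `ϱ(f,g) = Σ_{i=1}^∞ 3⁻ⁱ d(f zᵢ, g zᵢ)` on `Iso(ℤ) = Perm ℤ`, for a
fixed enumeration `z` of `ℤ` (indexed by `ℕ`, with weights `3⁻⁽ⁱ⁺¹⁾`). -/
def rhoZ (z : ℕ → ℤ) (f g : Equiv.Perm ℤ) : ℝ :=
  ∑' i : ℕ, (1 / 3 : ℝ) ^ (i + 1) * dZ (f (z i)) (g (z i))

namespace IsoIsoZAux

/-- The `i`-th term of a base-3 expansion with digits in `{0,1}`. -/
def term (a : ℕ → Bool) (i : ℕ) : ℝ := (1 / 3 : ℝ) ^ (i + 1) * (if a i then 1 else 0)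

lemma term_nonneg (a : ℕ → Bool) (i : ℕ) : 0 ≤ term a i := by
  unfold term
  cases a i <;> simp <;> positivity

lemma term_le (a : ℕ → Bool) (i : ℕ) : term a i ≤ (1 / 3 : ℝ) ^ (i + 1) := by
  unfold term
  cases a i <;> simp <;> positivity

lemma summable_geo_shift (n : ℕ) : Summable (fun i : ℕ => (1 / 3 : ℝ) ^ (i + n)) := by
  have h : Summable (fun i : ℕ => (1 / 3 : ℝ) ^ i) :=
    summable_geometric_of_lt_one (by norm_num) (by norm_num)
  have := h.mul_right ((1 / 3 : ℝ) ^ n)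
  convert this using 2 with i
  · rfl
  · rw [pow_add]

lemma summable_term (a : ℕ → Bool) : Summable (term a) :=
  Summable.of_nonneg_of_le (term_nonneg a) (term_le a) (summable_geo_shift 1)

lemma tsum_geo_shift (n : ℕ) :
    ∑' i : ℕ, (1 / 3 : ℝ) ^ (i + n) = (3 / 2 : ℝ) * (1 / 3 : ℝ) ^ n := by
  have h : ∑' i : ℕ, (1 / 3 : ℝ) ^ i = (3 / 2 : ℝ) := by
    rw [tsum_geometric_of_lt_one (by norm_num) (by norm_num)]
    norm_num
  calc ∑' i : ℕ, (1 / 3 : ℝ) ^ (i + n)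
      = ∑' i : ℕ, (1 / 3 : ℝ) ^ i * (1 / 3 : ℝ) ^ n := by
        congr 1; ext i; rw [pow_add]
    _ = (∑' i : ℕ, (1 / 3 : ℝ) ^ i) * (1 / 3 : ℝ) ^ n := tsum_mul_right
    _ = (3 / 2 : ℝ) * (1 / 3 : ℝ) ^ n := by rw [h]

/-- If the digits first differ at `j` (with `a j = true`, `b j = false`), the sums differ. -/
lemma tsum_lt_of_first_diff (a b : ℕ → Bool) (j : ℕ) (haj : a j = true)
    (hbj : b j = false) (hlt : ∀ i < j, a i = b i) :
    ∑' i, term b i < ∑' i, term a i := by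
  have hsa := summable_term a
  have hsb := summable_term b
  have hA : (∑ i ∈ Finset.range (j + 1), term a i) + ∑' i, term a (i + (j + 1)) =
      ∑' i, term a i := Summable.sum_add_tsum_nat_add (j + 1) (summable_term a)
  have hB : (∑ i ∈ Finset.range (j + 1), term b i) + ∑' i, term b (i + (j + 1)) =
      ∑' i, term b i := Summable.sum_add_tsum_nat_add (j + 1) (summable_term b)
  have hhead : ∑ i ∈ Finset.range j, term a i = ∑ i ∈ Finset.range j, term b i := by
    apply Finset.sum_congr rfl
    intro i hi
    rw [Finset.mem_range] at hi
    unfold term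
    rw [hlt i hi]
  have htermA : term a j = (1 / 3 : ℝ) ^ (j + 1) := by unfold term; rw [haj]; simp
  have htermB : term b j = 0 := by unfold term; rw [hbj]; simp
  have htailA : 0 ≤ ∑' i, term a (i + (j + 1)) :=
    tsum_nonneg (fun i => term_nonneg a _)
  have htailB : ∑' i, term b (i + (j + 1)) ≤ (3 / 2 : ℝ) * (1 / 3 : ℝ) ^ (j + 2) := by
    rw [← tsum_geo_shift (j + 2)]
    have h1 : Summable (fun i : ℕ => term b (i + (j + 1))) :=
      (summable_term b).comp_injective (add_left_injective (j + 1))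
    have h2 : Summable (fun i : ℕ => (1 / 3 : ℝ) ^ (i + (j + 2))) := summable_geo_shift (j + 2)
    apply Summable.tsum_le_tsum _ h1 h2
    intro i
    have := term_le b (i + (j + 1))
    calc term b (i + (j + 1)) ≤ (1 / 3 : ℝ) ^ (i + (j + 1) + 1) := this
      _ = (1 / 3 : ℝ) ^ (i + (j + 2)) := by ring_nf
  have hAsum : ∑ i ∈ Finset.range (j + 1), term a i =
      (∑ i ∈ Finset.range j, term a i) + term a j := Finset.sum_range_succ _ j
  have hBsum : ∑ i ∈ Finset.range (j + 1), term b i =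
      (∑ i ∈ Finset.range j, term b i) + term b j := Finset.sum_range_succ _ j
  have hpow : (3 / 2 : ℝ) * (1 / 3 : ℝ) ^ (j + 2) < (1 / 3 : ℝ) ^ (j + 1) := by
    have hp : (0:ℝ) < (1 / 3 : ℝ) ^ (j + 1) := by positivity
    have : (1 / 3 : ℝ) ^ (j + 2) = (1 / 3 : ℝ) ^ (j + 1) * (1 / 3) := by ring
    rw [this]; nlinarith
  rw [← hA, ← hB, hAsum, hBsum, htermA, htermB, hhead]
  linarith

lemma tsum_term_inj (a b : ℕ → Bool) (h : ∑' i, term a i = ∑' i, term b i) : a = b := by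
  by_contra hne
  have hex : ∃ j, a j ≠ b j := by
    by_contra h'
    push_neg at h'
    exact hne (funext h')
  classical
  let j := Nat.find hex
  have hj : a j ≠ b j := Nat.find_spec hex
  have hlt : ∀ i < j, a i = b i := fun i hi => by
    by_contra h'
    exact Nat.find_min hex hi h'
  cases haj : a j with
  | true =>
      have hbj : b j = false := by
        cases hbj : b j with
        | true => exact absurd (haj.trans hbj.symm) hj
        | false => rfl
      have := tsum_lt_of_first_diff a b j haj hbj hlt
      linarith
  | false =>
      have hbj : b j = true := by
        cases hbj : b j with
        | true => rfl
        | false => exact absurd (haj.trans hbj.symm) hj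
      have := tsum_lt_of_first_diff b a j hbj haj (fun i hi => (hlt i hi).symm)
      linarith

/-- Equal ϱ-values force equal disagreement sets. -/
lemma rho_eq_iff (z : ℕ → ℤ) (hz : Function.Surjective z) (f g f' g' : Equiv.Perm ℤ)
    (h : rhoZ z f g = rhoZ z f' g') (x : ℤ) : f x = g x ↔ f' x = g' x := by
  classical
  set a : ℕ → Bool := fun i => decide (¬ f (z i) = g (z i)) with ha
  set b : ℕ → Bool := fun i => decide (¬ f' (z i) = g' (z i)) with hb
  have hA : rhoZ z f g = ∑' i, term a i := by
    unfold rhoZ term dZ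
    congr 1
    ext i
    by_cases hi : f (z i) = g (z i) <;> simp [ha, hi]
  have hB : rhoZ z f' g' = ∑' i, term b i := by
    unfold rhoZ term dZ
    congr 1
    ext i
    by_cases hi : f' (z i) = g' (z i) <;> simp [hb, hi]
  have hab : a = b := tsum_term_inj a b (by rw [← hA, ← hB, h])
  obtain ⟨i, rfl⟩ := hz x
  have := congrFun hab i
  simp only [ha, hb, decide_eq_decide] at this
  tauto

end IsoIsoZAux

/-- Proposition 6.2: every surjective isometry `T` of `(Iso(ℤ), ϱ)` satisfies
`T(f) = T(e) ∘ f` for all `f ∈ Iso(ℤ)` (here `e` is the identity permutation and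
`T 1 * f` is the composition `T(e) ∘ f`). -/
theorem isoIsoZ_apply_eq_comp (z : ℕ → ℤ) (hz : Function.Bijective z)
    (T : Equiv.Perm ℤ → Equiv.Perm ℤ)
    (hTsurj : Function.Surjective T)
    (hTiso : ∀ f g : Equiv.Perm ℤ, rhoZ z (T f) (T g) = rhoZ z f g)
    (f : Equiv.Perm ℤ) :
    T f = T 1 * f := by
  classical
  have hD : ∀ f g : Equiv.Perm ℤ, ∀ x : ℤ, T f x = T g x ↔ f x = g x := fun f g x =>
    IsoIsoZAux.rho_eq_iff z hz.2 (T f) (T g) f g (hTiso f g) x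
  -- Step 1: T maps swaps to (T 1) * swap.
  have hswap : ∀ a b : ℤ, T (Equiv.swap a b) = T 1 * Equiv.swap a b := by
    intro a b
    rcases eq_or_ne a b with rfl | hab
    · rw [Equiv.swap_self]
      have : (Equiv.refl ℤ) = (1 : Equiv.Perm ℤ) := rfl
      rw [this, mul_one]
    · set s : Equiv.Perm ℤ := (T 1)⁻¹ * T (Equiv.swap a b) with hs
      have hfix : ∀ x : ℤ, s x = x ↔ Equiv.swap a b x = x := by
        intro x
        have h1 := hD (Equiv.swap a b) 1 x
        simp only [Equiv.Perm.one_apply] at h1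
        rw [← h1]
        constructor
        · intro hx
          have : T (Equiv.swap a b) x = T 1 (s x) := by
            simp [hs, Equiv.Perm.mul_apply]
          rw [this, hx]
        · intro hx
          simp [hs, Equiv.Perm.mul_apply, hx]
      have hsa : s a = b := by
        have h1 : s a ≠ a := by
          intro h
          have := (hfix a).mp h
          rw [Equiv.swap_apply_left] at this
          exact hab this.symm
        by_contra h2
        -- s a ∉ {a, b}, so swap fixes s a, so s (s a) = s a, so s a = a, contradiction
        have h3 : Equiv.swap a b (s a) = s a :=
          Equiv.swap_apply_of_ne_of_ne h1 h2
        have h4 : s (s a) = s a := (hfix (s a)).mpr h3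
        exact h1 (s.injective h4)
      have hsb : s b = a := by
        have h1 : s b ≠ b := by
          intro h
          have := (hfix b).mp h
          rw [Equiv.swap_apply_right] at this
          exact hab this
        by_contra h2
        have h3 : Equiv.swap a b (s b) = s b :=
          Equiv.swap_apply_of_ne_of_ne h2 h1
        have h4 : s (s b) = s b := (hfix (s b)).mpr h3
        exact h1 (s.injective h4)
      have hseq : s = Equiv.swap a b := by
        ext x
        by_cases hxa : x = a
        · subst hxa; rw [hsa, Equiv.swap_apply_left]
        · by_cases hxb : x = b
          · subst hxb; rw [hsb, Equiv.swap_apply_right]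
          · have h3 : Equiv.swap a b x = x := Equiv.swap_apply_of_ne_of_ne hxa hxb
            rw [h3]
            exact (hfix x).mpr h3
      have := congrArg (fun t => (T 1) * t) hseq
      simpa [hs, mul_assoc] using this
  -- Step 2: conclude.
  ext x
  have hgx : Equiv.swap x (f x) x = f x := Equiv.swap_apply_left x (f x)
  have h1 : T f x = T (Equiv.swap x (f x)) x :=
    (hD f (Equiv.swap x (f x)) x).mpr (by rw [hgx])
  rw [h1, hswap x (f x)]
  simp [Equiv.Perm.mul_apply, hgx]

end
end

section
/- Let ℤ carry the discrete metric, Iso(ℤ) the group of all bijections of ℤ with the metric ϱ(f,g) = Σ_{i=1}^∞ 3^{-i} d(f z_i, g z_i) for a fixed enumeration {z_i} of ℤ, and let Iso(Iso(ℤ)) be the group of surjective isometries of (Iso(ℤ), ϱ) acting on Iso(ℤ) by evaluation. Then this action is Cauchy-indivisible, and Iso(Iso(ℤ)) has no Weil completion: there exists a sequence {T_n} in Iso(Iso(ℤ)) that is Cauchy with respect to the uniformity of pointwise convergence on Iso(ℤ) while {T_n^{-1}} is not Cauchy. -/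
open Filter Topology

noncomputable section

/-- `Iso(Iso(ℤ))`: the surjective isometries of `(Iso(ℤ), ϱ)`. -/
def IsoIsoZ (z : ℕ → ℤ) : Type :=
  { T : Equiv.Perm ℤ → Equiv.Perm ℤ //
      Function.Surjective T ∧ ∀ f g : Equiv.Perm ℤ, rhoZ z (T f) (T g) = rhoZ z f g }

/-- `S` is a cluster point of the net `T` in `Iso(Iso(ℤ))` for the topology of
pointwise convergence on `(Iso(ℤ), ϱ)`; a net has a convergent subnet with limit `S`
iff `S` is a cluster point. -/
def ClusterPW (z : ℕ → ℤ) {ι : Type*} [Preorder ι] (T : ι → IsoIsoZ z)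
    (S : IsoIsoZ z) : Prop :=
  ∀ ε : ℝ, 0 < ε → ∀ F : Finset (Equiv.Perm ℤ), ∀ i₀ : ι,
    ∃ i, i₀ ≤ i ∧ ∀ f ∈ F, rhoZ z ((T i).1 f) (S.1 f) < ε

/-- A Cauchy net in `(Iso(ℤ), ϱ)`. -/
def CauchyNetRho (z : ℕ → ℤ) {ι : Type*} [Preorder ι] (c : ι → Equiv.Perm ℤ) : Prop :=
  ∀ ε : ℝ, 0 < ε → ∃ i₀ : ι, ∀ i j, i₀ ≤ i → i₀ ≤ j → rhoZ z (c i) (c j) < ε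

/-! ### Auxiliary lemmas -/

lemma dZ_nonneg (m n : ℤ) : 0 ≤ dZ m n := by unfold dZ; split_ifs <;> norm_num

lemma dZ_le_one (m n : ℤ) : dZ m n ≤ 1 := by unfold dZ; split_ifs <;> norm_num

lemma dZ_eq_zero_iff {m n : ℤ} : dZ m n = 0 ↔ m = n := by
  unfold dZ; split_ifs with h <;> simp [h]

lemma dZ_zero_or_one (m n : ℤ) : dZ m n = 0 ∨ dZ m n = 1 := by
  unfold dZ; split_ifs <;> simp

lemma summable_geom13 : Summable (fun i : ℕ => (1/3 : ℝ) ^ (i + 1)) := by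
  have h := (summable_geometric_of_lt_one (by norm_num : (0:ℝ) ≤ 1/3) (by norm_num)).mul_right (1/3)
  exact h.congr fun i => by rw [pow_succ]

lemma summable_aux (u : ℕ → ℝ) (h0 : ∀ i, 0 ≤ u i) (h1 : ∀ i, u i ≤ 1) :
    Summable (fun i => (1/3 : ℝ) ^ (i + 1) * u i) := by
  refine Summable.of_nonneg_of_le (fun i => mul_nonneg (by positivity) (h0 i))
    (fun i => ?_) summable_geom13
  calc (1/3 : ℝ) ^ (i + 1) * u i ≤ (1/3 : ℝ) ^ (i + 1) * 1 := by
        exact mul_le_mul_of_nonneg_left (h1 i) (by positivity)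
    _ = (1/3 : ℝ) ^ (i + 1) := mul_one _

lemma summable_rho (z : ℕ → ℤ) (f g : Equiv.Perm ℤ) :
    Summable (fun i => (1/3 : ℝ) ^ (i + 1) * dZ (f (z i)) (g (z i))) :=
  summable_aux _ (fun i => dZ_nonneg _ _) (fun i => dZ_le_one _ _)

lemma rho_nonneg (z : ℕ → ℤ) (f g : Equiv.Perm ℤ) : 0 ≤ rhoZ z f g :=
  tsum_nonneg fun i => mul_nonneg (by positivity) (dZ_nonneg _ _)

/-- Lower bound: if `f` and `g` differ at `z k` then `ϱ(f,g) ≥ 3^{-(k+1)}`. -/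
lemma le_rho (z : ℕ → ℤ) {f g : Equiv.Perm ℤ} {k : ℕ} (h : f (z k) ≠ g (z k)) :
    (1/3 : ℝ) ^ (k + 1) ≤ rhoZ z f g := by
  have := Summable.le_tsum (summable_rho z f g) k
    (fun j _ => mul_nonneg (by positivity) (dZ_nonneg _ _))
  simpa [dZ, h, rhoZ] using this

/-- Tail bound. -/
lemma tsum_tail_le (K : ℕ) (u : ℕ → ℝ) (h0 : ∀ i, 0 ≤ u i) (h1 : ∀ i, u i ≤ 1) :
    (∑' n : ℕ, (1/3 : ℝ) ^ ((n + K) + 1) * u (n + K)) ≤ (1/3 : ℝ) ^ K * (1/2) := by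
  have hs1 : Summable (fun n : ℕ => (1/3 : ℝ) ^ ((n + K) + 1) * u (n + K)) :=
    (summable_aux u h0 h1).comp_injective (add_left_injective K)
  have hs2 : Summable (fun n : ℕ => (1/3 : ℝ) ^ ((n + K) + 1)) :=
    summable_geom13.comp_injective (add_left_injective K)
  calc (∑' n : ℕ, (1/3 : ℝ) ^ ((n + K) + 1) * u (n + K))
      ≤ ∑' n : ℕ, (1/3 : ℝ) ^ ((n + K) + 1) := by
        refine Summable.tsum_le_tsum (fun n => ?_) hs1 hs2
        calc (1/3 : ℝ) ^ ((n + K) + 1) * u (n + K) ≤ (1/3 : ℝ) ^ ((n + K) + 1) * 1 :=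
              mul_le_mul_of_nonneg_left (h1 _) (by positivity)
          _ = _ := mul_one _
    _ = (1/3 : ℝ) ^ (K + 1) * ∑' n : ℕ, (1/3 : ℝ) ^ n := by
        rw [← tsum_mul_left]
        congr 1; funext n; rw [← pow_add]; ring_nf
    _ = (1/3 : ℝ) ^ K * (1/2) := by
        rw [tsum_geometric_of_lt_one (by norm_num) (by norm_num), pow_succ]; norm_num; ring

/-- Upper bound: if `f` and `g` agree on `z k` for all `k < K`, then
`ϱ(f,g) ≤ 3^{-K}/2`. -/
lemma rho_le (z : ℕ → ℤ) {f g : Equiv.Perm ℤ} {K : ℕ}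
    (h : ∀ k < K, f (z k) = g (z k)) : rhoZ z f g ≤ (1/3 : ℝ) ^ K * (1/2) := by
  rw [rhoZ, ← Summable.sum_add_tsum_nat_add K (summable_rho z f g)]
  have h1 : ∑ i ∈ Finset.range K, (1/3 : ℝ) ^ (i + 1) * dZ (f (z i)) (g (z i)) = 0 := by
    refine Finset.sum_eq_zero fun i hi => ?_
    rw [dZ_eq_zero_iff.mpr (h i (Finset.mem_range.mp hi)), mul_zero]
  rw [h1, zero_add]
  exact tsum_tail_le K (fun i => dZ (f (z i)) (g (z i))) (fun i => dZ_nonneg _ _)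
    (fun i => dZ_le_one _ _)

/-- If two `{0,1}`-valued sequences first differ at `k`, with `a k = 0 < 1 = b k`,
the weighted sums satisfy a strict inequality. -/
lemma sum_lt_sum (a b : ℕ → ℝ) (ha : ∀ i, a i = 0 ∨ a i = 1) (hb : ∀ i, b i = 0 ∨ b i = 1)
    (k : ℕ) (hagree : ∀ i < k, a i = b i) (hak : a k = 0) (hbk : b k = 1) :
    (∑' i : ℕ, (1/3 : ℝ) ^ (i + 1) * a i) < ∑' i : ℕ, (1/3 : ℝ) ^ (i + 1) * b i := by
  have ha0 : ∀ i, 0 ≤ a i := fun i => by rcases ha i with h | h <;> rw [h] <;> norm_num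
  have ha1 : ∀ i, a i ≤ 1 := fun i => by rcases ha i with h | h <;> rw [h] <;> norm_num
  have hb0 : ∀ i, 0 ≤ b i := fun i => by rcases hb i with h | h <;> rw [h] <;> norm_num
  have hb1 : ∀ i, b i ≤ 1 := fun i => by rcases hb i with h | h <;> rw [h] <;> norm_num
  rw [← Summable.sum_add_tsum_nat_add (k+1) (summable_aux a ha0 ha1),
      ← Summable.sum_add_tsum_nat_add (k+1) (summable_aux b hb0 hb1)]
  rw [Finset.sum_range_succ, Finset.sum_range_succ]
  have hS : ∑ i ∈ Finset.range k, (1/3 : ℝ) ^ (i + 1) * a i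
      = ∑ i ∈ Finset.range k, (1/3 : ℝ) ^ (i + 1) * b i :=
    Finset.sum_congr rfl fun i hi => by rw [hagree i (Finset.mem_range.mp hi)]
  have htail_a : (∑' n : ℕ, (1/3 : ℝ) ^ ((n + (k+1)) + 1) * a (n + (k+1)))
      ≤ (1/3 : ℝ) ^ (k+1) * (1/2) := tsum_tail_le (k+1) a ha0 ha1
  have htail_b : 0 ≤ ∑' n : ℕ, (1/3 : ℝ) ^ ((n + (k+1)) + 1) * b (n + (k+1)) :=
    tsum_nonneg fun n => mul_nonneg (by positivity) (hb0 _)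
  have hpos : (0:ℝ) < (1/3 : ℝ) ^ (k+1) := by positivity
  rw [hS, hak, hbk]
  have := htail_a
  nlinarith [htail_a, htail_b, hpos]

/-- `ϱ` determines the set of coordinates of disagreement. -/
lemma digits_eq (a b : ℕ → ℝ) (ha : ∀ i, a i = 0 ∨ a i = 1) (hb : ∀ i, b i = 0 ∨ b i = 1)
    (hsum : (∑' i : ℕ, (1/3 : ℝ) ^ (i + 1) * a i) = ∑' i : ℕ, (1/3 : ℝ) ^ (i + 1) * b i)
    (k : ℕ) : a k = b k := by
  by_contra hne
  have hex : ∃ n, a n ≠ b n := ⟨k, hne⟩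
  set N := Nat.find hex with hNdef
  have hN : a N ≠ b N := Nat.find_spec hex
  have hlt : ∀ i < N, a i = b i := fun i hi => not_not.mp (Nat.find_min hex hi)
  rcases ha N with h1 | h1 <;> rcases hb N with h2 | h2
  · exact hN (h1.trans h2.symm)
  · exact absurd hsum (ne_of_lt (sum_lt_sum a b ha hb N hlt h1 h2))
  · exact absurd hsum.symm (ne_of_lt (sum_lt_sum b a hb ha N (fun i hi => (hlt i hi).symm) h2 h1))
  · exact hN (h1.trans h2.symm)

/-- For an isometry `T`, `T f` and `T g` agree at `z k` iff `f` and `g` do. -/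
lemma coord_iff (z : ℕ → ℤ) (T : IsoIsoZ z) (f g : Equiv.Perm ℤ) (k : ℕ) :
    T.1 f (z k) = T.1 g (z k) ↔ f (z k) = g (z k) := by
  have h := T.2.2 f g
  have hd := digits_eq (fun i => dZ (T.1 f (z i)) (T.1 g (z i)))
    (fun i => dZ (f (z i)) (g (z i))) (fun i => dZ_zero_or_one _ _)
    (fun i => dZ_zero_or_one _ _) h k
  by_cases h1 : T.1 f (z k) = T.1 g (z k) <;> by_cases h2 : f (z k) = g (z k) <;>
    simp only [dZ, h1, h2, if_pos, if_neg, if_true, if_false] at hd ⊢ <;>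
    first
      | tauto
      | norm_num at hd

/-- Every surjective isometry of `(Iso(ℤ), ϱ)` acts coordinate-independently:
there is `σ : ℤ → ℤ` with `T f (z k) = σ (f (z k))` for all `f, k`. -/
lemma exists_sigma (z : ℕ → ℤ) (hz : Function.Bijective z) (T : IsoIsoZ z) :
    ∃ σ : ℤ → ℤ, ∀ (f : Equiv.Perm ℤ) (k : ℕ), T.1 f (z k) = σ (f (z k)) := by
  classical
  -- the coordinate maps
  set φ : ℕ → ℤ → ℤ := fun k a => T.1 (Equiv.swap (z k) a) (z k) with hφ
  have key : ∀ (f : Equiv.Perm ℤ) (k : ℕ), T.1 f (z k) = φ k (f (z k)) := by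
    intro f k
    have : f (z k) = (Equiv.swap (z k) (f (z k))) (z k) := (Equiv.swap_apply_left _ _).symm
    exact (coord_iff z T f (Equiv.swap (z k) (f (z k))) k).mpr this
  have φinj : ∀ k, Function.Injective (φ k) := by
    intro k a b hab
    by_contra hne
    have h1 : (Equiv.swap (z k) a) (z k) = a := Equiv.swap_apply_left _ _
    have h2 : (Equiv.swap (z k) b) (z k) = b := Equiv.swap_apply_left _ _
    have : (Equiv.swap (z k) a) (z k) ≠ (Equiv.swap (z k) b) (z k) := by
      rw [h1, h2]; exact hne
    exact this ((coord_iff z T (Equiv.swap (z k) a) (Equiv.swap (z k) b) k).mp hab)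
  have φsurj : ∀ k, Function.Surjective (φ k) := by
    intro k b
    obtain ⟨h, hh⟩ := T.2.1 (Equiv.swap (z k) b)
    refine ⟨h (z k), ?_⟩
    rw [← key h k, hh, Equiv.swap_apply_left]
  have φconst : ∀ j k a, φ j a = φ k a := by
    intro j k a
    by_contra hne
    have hjk : j ≠ k := fun h => hne (by rw [h])
    have hzjk : z j ≠ z k := fun h => hjk (hz.1 h)
    obtain ⟨c, hc⟩ := φsurj k (φ j a)
    have hca : c ≠ a := by
      intro h; rw [h] at hc; exact hne hc.symm
    -- build a permutation h with h (z j) = a, h (z k) = c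
    set σ₀ : Equiv.Perm ℤ := Equiv.swap (z j) a with hσ₀
    set h : Equiv.Perm ℤ := (Equiv.swap (σ₀ (z k)) c) * σ₀ with hh
    have hne1 : a ≠ σ₀ (z k) := by
      intro habs
      have : σ₀ (z j) = σ₀ (z k) := by rw [Equiv.swap_apply_left, habs]
      exact hzjk (σ₀.injective this)
    have h1 : h (z j) = a := by
      have e1 : h (z j) = (Equiv.swap (σ₀ (z k)) c) (σ₀ (z j)) := rfl
      rw [e1, Equiv.swap_apply_left, Equiv.swap_apply_of_ne_of_ne hne1 (Ne.symm hca)]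
    have h2 : h (z k) = c := by
      have e2 : h (z k) = (Equiv.swap (σ₀ (z k)) c) (σ₀ (z k)) := rfl
      rw [e2, Equiv.swap_apply_left]
    have hTj : T.1 h (z j) = φ j a := by rw [key h j, h1]
    have hTk : T.1 h (z k) = φ j a := by rw [key h k, h2, hc]
    have : z j = z k := (T.1 h).injective (by rw [hTj, hTk])
    exact hzjk this
  exact ⟨φ 0, fun f k => by rw [key f k, φconst k 0]⟩

/-- A net in `(Iso(ℤ), ϱ)` is Cauchy iff each coordinate eventually stabilizes. -/
lemma cauchy_iff_ptwise (z : ℕ → ℤ) {ι : Type*} [Nonempty ι] [Preorder ι]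
    [IsDirected ι (· ≤ ·)] (c : ι → Equiv.Perm ℤ) :
    CauchyNetRho z c ↔
      ∀ k : ℕ, ∃ i₀ : ι, ∀ i j, i₀ ≤ i → i₀ ≤ j → c i (z k) = c j (z k) := by
  constructor
  · intro h k
    obtain ⟨i₀, hi₀⟩ := h ((1/3 : ℝ) ^ (k + 1)) (by positivity)
    refine ⟨i₀, fun i j hi hj => ?_⟩
    by_contra hne
    exact absurd (hi₀ i j hi hj) (not_lt.mpr (le_rho z hne))
  · intro h ε hε
    classical
    obtain ⟨K, hK⟩ := exists_pow_lt_of_lt_one hε (by norm_num : (1/3 : ℝ) < 1)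
    choose i₀ hi₀ using h
    obtain ⟨M, hM⟩ := Finset.exists_le ((Finset.range K).image i₀)
    refine ⟨M, fun i j hi hj => ?_⟩
    have hagree : ∀ k < K, c i (z k) = c j (z k) := by
      intro k hk
      have hkM : i₀ k ≤ M := hM _ (Finset.mem_image_of_mem _ (Finset.mem_range.mpr hk))
      exact hi₀ k i j (hkM.trans hi) (hkM.trans hj)
    calc rhoZ z (c i) (c j) ≤ (1/3 : ℝ) ^ K * (1/2) := rho_le z hagree
      _ < (1/3 : ℝ) ^ K := by nlinarith [pow_pos (by norm_num : (0:ℝ) < 1/3) K]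
      _ < ε := hK

/-- Part 1: Cauchy indivisibility of the evaluation action. -/
lemma part1 (z : ℕ → ℤ) (hz : Function.Bijective z)
    (ι : Type) [Nonempty ι] [Preorder ι] [IsDirected ι (· ≤ ·)]
    (T : ι → IsoIsoZ z)
    (hf : ∃ f : Equiv.Perm ℤ, CauchyNetRho z fun i => (T i).1 f)
    (g : Equiv.Perm ℤ) : CauchyNetRho z fun i => (T i).1 g := by
  obtain ⟨f, hf⟩ := hf
  choose σ hσ using fun i => exists_sigma z hz (T i)
  rw [cauchy_iff_ptwise] at hf ⊢
  intro k
  -- find k' with f (z k') = g (z k)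
  obtain ⟨k', hk'⟩ := hz.2 (f.symm (g (z k)))
  have hfk' : f (z k') = g (z k) := by rw [hk', Equiv.apply_symm_apply]
  obtain ⟨i₀, hi₀⟩ := hf k'
  refine ⟨i₀, fun i j hi hj => ?_⟩
  have h1 := hi₀ i j hi hj
  rw [hσ i f k', hσ j f k', hfk'] at h1
  rw [hσ i g k, hσ j g k]
  exact h1

/-- The cycle `0 → 1 → ⋯ → n → 0` on `ℤ`. -/
def cyc (n : ℕ) : Equiv.Perm ℤ where
  toFun k := if 0 ≤ k ∧ k < n then k + 1 else if k = n then 0 else k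
  invFun k := if 1 ≤ k ∧ k ≤ n then k - 1 else if k = 0 then (n : ℤ) else k
  left_inv := by intro k; dsimp only; split_ifs <;> omega
  right_inv := by intro k; dsimp only; split_ifs <;> omega

lemma cyc_apply (n : ℕ) (k : ℤ) :
    cyc n k = if 0 ≤ k ∧ k < n then k + 1 else if k = n then 0 else k := rfl

lemma cyc_inv_apply (n : ℕ) (k : ℤ) :
    (cyc n)⁻¹ k = if 1 ≤ k ∧ k ≤ n then k - 1 else if k = 0 then (n : ℤ) else k := rfl

lemma cyc_stable {a : ℤ} {n m : ℕ} (hn : a.toNat + 1 ≤ n) (hm : a.toNat + 1 ≤ m) :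
    cyc n a = cyc m a := by
  rw [cyc_apply, cyc_apply]; split_ifs <;> omega

lemma cyc_inv_zero (n : ℕ) : (cyc n)⁻¹ 0 = (n : ℤ) := by
  rw [cyc_inv_apply]; split_ifs <;> omega

/-- Left translation by `σ` as an element of `Iso(Iso(ℤ))`. -/
def ltrans (z : ℕ → ℤ) (σ : Equiv.Perm ℤ) : IsoIsoZ z :=
  ⟨fun f => σ * f, by
    constructor
    · intro g; exact ⟨σ⁻¹ * g, by group⟩
    · intro f g
      unfold rhoZ
      congr 1; funext i
      congr 1
      simp only [Equiv.Perm.mul_apply, dZ]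
      exact if_congr σ.injective.eq_iff rfl rfl⟩

lemma ltrans_apply (z : ℕ → ℤ) (σ : Equiv.Perm ℤ) (f : Equiv.Perm ℤ) (x : ℤ) :
    (ltrans z σ).1 f x = σ (f x) := rfl

/-- Proposition 6.5: the evaluation action of `Iso(Iso(ℤ))` on `(Iso(ℤ), ϱ)` is
Cauchy-indivisible, and `Iso(Iso(ℤ))` has no Weil completion: there is a sequence
`(T_n)` in `Iso(Iso(ℤ))` which is Cauchy for the uniformity of pointwise convergence
on `Iso(ℤ)` while the sequence of inverses `(T_n⁻¹)` is not Cauchy. -/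
theorem isoIsoZ_cauchyIndivisible_and_no_weil (z : ℕ → ℤ) (hz : Function.Bijective z) :
    (∀ (ι : Type) [Nonempty ι] [Preorder ι] [IsDirected ι (· ≤ ·)],
      ∀ T : ι → IsoIsoZ z, (∀ S : IsoIsoZ z, ¬ ClusterPW z T S) →
        (∃ f : Equiv.Perm ℤ, CauchyNetRho z fun i => (T i).1 f) →
        ∀ g : Equiv.Perm ℤ, CauchyNetRho z fun i => (T i).1 g) ∧
    ∃ T Tinv : ℕ → IsoIsoZ z,
      (∀ n : ℕ, Function.LeftInverse ((Tinv n).1) ((T n).1) ∧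
        Function.RightInverse ((Tinv n).1) ((T n).1)) ∧
      (∀ f : Equiv.Perm ℤ, CauchyNetRho z fun n => (T n).1 f) ∧
      ¬ (∀ f : Equiv.Perm ℤ, CauchyNetRho z fun n => (Tinv n).1 f) := by
  constructor
  · intro ι _ _ _ T _ hf g
    exact part1 z hz ι T hf g
  · refine ⟨fun n => ltrans z (cyc n), fun n => ltrans z (cyc n)⁻¹, ?_, ?_, ?_⟩
    · intro n
      constructor
      · intro f
        show (cyc n)⁻¹ * (cyc n * f) = f
        group
      · intro f
        show cyc n * ((cyc n)⁻¹ * f) = f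
        group
    · intro f
      rw [cauchy_iff_ptwise]
      intro k
      refine ⟨(f (z k)).toNat + 1, fun i j hi hj => ?_⟩
      show cyc i (f (z k)) = cyc j (f (z k))
      exact cyc_stable hi hj
    · intro h
      have h1 := (cauchy_iff_ptwise z _).mp (h 1)
      obtain ⟨k₀, hk₀⟩ := hz.2 0
      obtain ⟨n₀, hn₀⟩ := h1 k₀
      have := hn₀ n₀ (n₀ + 1) le_rfl (Nat.le_succ _)
      have e : ∀ n : ℕ, (ltrans z (cyc n)⁻¹).1 1 (z k₀) = (n : ℤ) := by
        intro n
        rw [ltrans_apply]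
        show (cyc n)⁻¹ ((1 : Equiv.Perm ℤ) (z k₀)) = (n : ℤ)
        rw [Equiv.Perm.one_apply, hk₀, cyc_inv_zero]
      rw [e n₀, e (n₀ + 1)] at this
      omega

end
end
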